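/- arXiv:1209.6621 — 12 statements merged into one kernel-verified Lean document; each statement's English description precedes it below -/
import Mathlib

section
/- For every integer k ≥ 0, ∑_{(a,b)} ( [a+1]·[b+1]·[a+b+2] / [2] )² = 3(k+3)² / ( 2⁶ · sin⁴(π/(k+3)) · sin²(2π/(k+3)) ), where the sum runs over all pairs of natural numbers (a,b) with a + b ≤ k and [m] denotes sin(mπ/(k+3))/sin(π/(k+3)). (This is the global dimension of the fusion category A_k(SU(3)).) -/
open Real Finset

lemma exp_sum_zero (n m : ℕ) (h1 : 0 < m) (h2 : m < n) :
    ∑ y ∈ Finset.range n, Complex.exp ((2 * (π:ℂ) * m * y / n) * Complex.I) = 0 := by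
  have hn : (n:ℂ) ≠ 0 := by
    exact_mod_cast (h1.trans h2).ne'
  set z : ℂ := Complex.exp ((2 * (π:ℂ) * m / n) * Complex.I) with hz
  have hzy : ∀ y : ℕ, Complex.exp ((2 * (π:ℂ) * m * y / n) * Complex.I) = z ^ y := by
    intro y
    rw [hz, ← Complex.exp_nat_mul]
    congr 1
    ring
  have hz1 : z ≠ 1 := by
    rw [hz, Ne, Complex.exp_eq_one_iff]
    rintro ⟨j, hj⟩
    have hI : (2 * (π:ℂ)) * ((m:ℂ)/n) * Complex.I = (2 * (π:ℂ)) * (j:ℂ) * Complex.I := by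
      rw [show (2 * (π:ℂ)) * ((m:ℂ)/n) * Complex.I = 2 * (π:ℂ) * m / n * Complex.I from by ring, hj]
      ring
    have hπ : (2 * (π:ℂ)) ≠ 0 := by
      simp [Real.pi_ne_zero, Complex.ofReal_ne_zero]
    have h3 : ((m:ℂ)/n) = (j:ℂ) :=
      mul_left_cancel₀ hπ (mul_right_cancel₀ Complex.I_ne_zero hI)
    have h4' : (((m:ℝ)/n : ℝ) : ℂ) = (((j:ℝ) : ℝ) : ℂ) := by push_cast; exact h3
    have h4 : ((m:ℝ)/n) = (j:ℝ) := by exact_mod_cast h4'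
    have hn' : (0:ℝ) < n := by exact_mod_cast h1.trans h2
    have hlt : (m:ℝ)/n < 1 := by
      rw [div_lt_one hn']; exact_mod_cast h2
    have hgt : (0:ℝ) < (m:ℝ)/n := by positivity
    have hj0 : (0:ℤ) < j := by exact_mod_cast h4 ▸ hgt
    have hj1 : (1:ℝ) ≤ (j:ℝ) := by exact_mod_cast hj0
    linarith [h4 ▸ hlt]
  have hzn : z ^ n = 1 := by
    rw [hz, ← Complex.exp_nat_mul]
    have : (n : ℂ) * ((2 * (π:ℂ) * m / n) * Complex.I) = (m : ℤ) * (2 * π * Complex.I) := by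
      field_simp
      push_cast
      ring
    rw [this, Complex.exp_int_mul_two_pi_mul_I]
  calc ∑ y ∈ Finset.range n, Complex.exp ((2 * (π:ℂ) * m * y / n) * Complex.I)
      = ∑ y ∈ Finset.range n, z ^ y := Finset.sum_congr rfl fun y _ => hzy y
    _ = (z ^ n - 1) / (z - 1) := geom_sum_eq hz1 n
    _ = 0 := by rw [hzn]; simp

lemma cos_phase_sum (n m : ℕ) (h1 : 0 < m) (h2 : m < n) (φ : ℝ) :
    ∑ y ∈ Finset.range n, Real.cos (2 * π * m * y / n + φ) = 0 := by
  have key := exp_sum_zero n m h1 h2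
  have := congrArg Complex.re (congrArg (Complex.exp ((φ:ℂ) * Complex.I) * ·) key)
  simp only [Finset.mul_sum, mul_zero, Complex.zero_re] at this
  rw [← this, Complex.re_sum]
  refine Finset.sum_congr rfl fun y _ => ?_
  rw [← Complex.exp_add]
  have harg : (φ:ℂ) * Complex.I + (2 * (π:ℂ) * m * y / n) * Complex.I
      = ((2 * π * m * y / n + φ : ℝ) : ℂ) * Complex.I := by
    push_cast; ring
  rw [harg, Complex.exp_ofReal_mul_I_re]

lemma ptwise (A B : ℝ) : (1/2 - Real.cos A/2) * (1/2 - Real.cos (B+A)/2)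
    = 1/4 + Real.cos B/8 - Real.cos A/4 - Real.cos (A+B)/4 + Real.cos (2*A+B)/8 := by
  rw [Real.cos_add B A, Real.cos_add A B, Real.cos_add (2*A) B, Real.cos_two_mul,
    Real.sin_two_mul]
  nlinarith [Real.sin_sq_add_cos_sq A, Real.sin_sq_add_cos_sq B]

lemma outer_ptwise (A : ℝ) : (1/2 - Real.cos A/2) * (2 + Real.cos A)
    = 3/4 - Real.cos A/2 - Real.cos (2*A)/4 := by
  rw [Real.cos_two_mul]
  nlinarith [Real.sin_sq_add_cos_sq A]

lemma cos_sum_one (n : ℕ) (hn : 3 ≤ n) (φ : ℝ) :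
    ∑ y ∈ Finset.range n, Real.cos (2 * π * y / n + φ) = 0 := by
  have h := cos_phase_sum n 1 one_pos (by omega) φ
  simpa using h

lemma cos_sum_two (n : ℕ) (hn : 3 ≤ n) (φ : ℝ) :
    ∑ y ∈ Finset.range n, Real.cos (2 * (2 * π * y / n) + φ) = 0 := by
  have h := cos_phase_sum n 2 two_pos (by omega) φ
  rw [← h]
  refine Finset.sum_congr rfl fun y _ => ?_
  congr 1
  push_cast
  ring

lemma innerSumAux (n x : ℕ) (hn : 3 ≤ n) :
    ∑ y ∈ Finset.range n, Real.sin ((y:ℝ)*π/n)^2 * Real.sin (((x:ℝ)+y)*π/n)^2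
      = n * (2 + Real.cos (2*π*x/n)) / 8 := by
  set B : ℝ := 2*π*x/n with hB
  have step : ∀ y ∈ Finset.range n,
      Real.sin ((y:ℝ)*π/n)^2 * Real.sin (((x:ℝ)+y)*π/n)^2
        = 1/4 + Real.cos B/8 - Real.cos (2*π*y/n)/4 - Real.cos (2*π*y/n + B)/4
            + Real.cos (2*(2*π*y/n) + B)/8 := by
    intro y _
    rw [Real.sin_sq_eq_half_sub, Real.sin_sq_eq_half_sub]
    have e1 : 2*((y:ℝ)*π/n) = 2*π*y/n := by ring
    have e2 : 2*(((x:ℝ)+y)*π/n) = B + 2*π*y/n := by rw [hB]; ring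
    rw [e1, e2, ptwise (2*π*y/n) B]
  rw [Finset.sum_congr rfl step]
  have c1 := cos_sum_one n hn 0
  have c1' : ∑ y ∈ Finset.range n, Real.cos (2*π*y/n) = 0 := by
    simpa using c1
  have c2 := cos_sum_one n hn B
  have c3 := cos_sum_two n hn B
  simp only [Finset.sum_add_distrib, Finset.sum_sub_distrib, ← Finset.sum_div,
    Finset.sum_const, Finset.card_range, c1', c2, c3, nsmul_eq_mul]
  ring

lemma grid_sum (n : ℕ) (hn : 3 ≤ n) :
    ∑ x ∈ Finset.range n, ∑ y ∈ Finset.range n,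
        Real.sin ((x:ℝ)*π/n)^2 * Real.sin ((y:ℝ)*π/n)^2 * Real.sin (((x:ℝ)+y)*π/n)^2
      = 3*(n:ℝ)^2/32 := by
  have step : ∀ x ∈ Finset.range n,
      (∑ y ∈ Finset.range n,
        Real.sin ((x:ℝ)*π/n)^2 * Real.sin ((y:ℝ)*π/n)^2 * Real.sin (((x:ℝ)+y)*π/n)^2)
      = 3*(n:ℝ)/32 - (n:ℝ)/16 * Real.cos (2*π*x/n) - (n:ℝ)/32 * Real.cos (2*(2*π*x/n)) := by
    intro x _
    have : ∀ y ∈ Finset.range n,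
        Real.sin ((x:ℝ)*π/n)^2 * Real.sin ((y:ℝ)*π/n)^2 * Real.sin (((x:ℝ)+y)*π/n)^2
        = Real.sin ((x:ℝ)*π/n)^2 * (Real.sin ((y:ℝ)*π/n)^2 * Real.sin (((x:ℝ)+y)*π/n)^2) :=
      fun y _ => by ring
    rw [Finset.sum_congr rfl this, ← Finset.mul_sum, innerSumAux n x hn,
      Real.sin_sq_eq_half_sub]
    have e1 : 2*((x:ℝ)*π/n) = 2*π*x/n := by ring
    rw [e1]
    have := outer_ptwise (2*π*x/n)
    linear_combination ((n:ℝ)/8) * this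
  rw [Finset.sum_congr rfl step]
  have c1' : ∑ x ∈ Finset.range n, Real.cos (2*π*x/n) = 0 := by
    simpa using cos_sum_one n hn 0
  have c3' : ∑ x ∈ Finset.range n, Real.cos (2*(2*π*x/n)) = 0 := by
    simpa using cos_sum_two n hn 0
  simp only [Finset.sum_sub_distrib, ← Finset.mul_sum, Finset.sum_const,
    Finset.card_range, c1', c3', nsmul_eq_mul]
  ring


noncomputable def FSU3 (n : ℕ) (p : ℕ × ℕ) : ℝ :=
  Real.sin ((p.1:ℝ)*π/n)^2 * Real.sin ((p.2:ℝ)*π/n)^2 * Real.sin (((p.1:ℝ)+p.2)*π/n)^2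

lemma sin_refl (n x : ℕ) (hn : 0 < n) (hx : x ≤ n) :
    Real.sin (((n - x : ℕ):ℝ)*π/n)^2 = Real.sin ((x:ℝ)*π/n)^2 := by
  have h1 : ((n - x : ℕ):ℝ) = (n:ℝ) - x := by
    rw [Nat.cast_sub hx]
  have hn' : (n:ℝ) ≠ 0 := by exact_mod_cast hn.ne'
  have h2 : ((n:ℝ) - x)*π/n = π - (x:ℝ)*π/n := by field_simp
  rw [h1, h2, Real.sin_pi_sub]

lemma FSU3_refl (n : ℕ) (hn : 0 < n) (p : ℕ × ℕ) (h1 : p.1 ≤ n) (h2 : p.2 ≤ n)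
    (h3 : p.1 + p.2 ≤ 2*n) :
    FSU3 n (n - p.1, n - p.2) = FSU3 n p := by
  unfold FSU3
  simp only
  rw [sin_refl n p.1 hn h1, sin_refl n p.2 hn h2]
  congr 1
  have e : ((n - p.1 : ℕ):ℝ) + ((n - p.2 : ℕ):ℝ) = 2*(n:ℝ) - ((p.1:ℝ) + p.2) := by
    rw [Nat.cast_sub h1, Nat.cast_sub h2]; ring
  have hn' : (n:ℝ) ≠ 0 := by exact_mod_cast hn.ne'
  have e2 : (2*(n:ℝ) - ((p.1:ℝ) + p.2))*π/n = 2*π - ((p.1:ℝ)+p.2)*π/n := by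
    field_simp
  rw [e, e2]
  have : Real.sin (2*π - ((p.1:ℝ)+p.2)*π/n) = - Real.sin (((p.1:ℝ)+p.2)*π/n) := by
    rw [Real.sin_sub]; simp [Real.sin_two_pi, Real.cos_two_pi]
  rw [this]; ring

lemma tri_sum (n : ℕ) (hn : 3 ≤ n) :
    ∑ p ∈ (Finset.range n ×ˢ Finset.range n).filter
        (fun p => 0 < p.1 ∧ 0 < p.2 ∧ p.1 + p.2 < n), FSU3 n p
      = 3*(n:ℝ)^2/64 := by
  have hn0 : 0 < n := by omega
  have hnR : (n:ℝ) ≠ 0 := by positivity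
  set grid := Finset.range n ×ˢ Finset.range n with hgrid
  set cB : ℕ × ℕ → Prop := fun p => 0 < p.1 ∧ 0 < p.2 ∧ p.1 + p.2 < n with hcB
  set cC : ℕ × ℕ → Prop := fun p => 0 < p.1 ∧ 0 < p.2 ∧ n < p.1 + p.2 with hcC
  have hG : ∑ p ∈ grid, FSU3 n p = 3*(n:ℝ)^2/32 := by
    rw [hgrid, Finset.sum_product]
    exact grid_sum n hn
  have hfull : ∑ p ∈ grid.filter (fun p => cB p ∨ cC p), FSU3 n p
      = ∑ p ∈ grid, FSU3 n p := by
    apply Finset.sum_filter_of_ne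
    intro p hp hF
    by_contra hc
    apply hF
    rw [hgrid] at hp
    simp only [Finset.mem_product, Finset.mem_range] at hp
    rw [hcB, hcC] at hc
    push_neg at hc
    unfold FSU3
    rcases Nat.eq_zero_or_pos p.1 with h | h
    · simp [h]
    rcases Nat.eq_zero_or_pos p.2 with h' | h'
    · simp [h']
    have hs : p.1 + p.2 = n := by
      rcases hc with ⟨h1, h2⟩
      rcases lt_or_ge (p.1+p.2) n with hl | hl
      · have := h1 h h'; omega
      · have hng : ¬ (n < p.1 + p.2) := fun hl2 => by have := h2 h h'; omega
        omega
    have : ((p.1:ℝ) + p.2) * π / n = π := by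
      have : ((p.1:ℝ) + p.2) = (n:ℝ) := by exact_mod_cast congrArg (Nat.cast (R:=ℝ)) hs
      rw [this]; field_simp
    rw [this, Real.sin_pi]
    ring
  have hsplit : grid.filter (fun p => cB p ∨ cC p)
      = grid.filter cB ∪ grid.filter cC := Finset.filter_or _ _ _
  have hdisj : Disjoint (grid.filter cB) (grid.filter cC) := by
    rw [Finset.disjoint_left]
    intro p h1 h2
    rw [Finset.mem_filter, hcB] at h1
    rw [Finset.mem_filter, hcC] at h2
    omega
  have hCB : ∑ p ∈ grid.filter cC, FSU3 n p = ∑ p ∈ grid.filter cB, FSU3 n p := by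
    refine Finset.sum_nbij' (fun p => (n - p.1, n - p.2)) (fun p => (n - p.1, n - p.2))
      ?_ ?_ ?_ ?_ ?_
    · intro p hp
      rw [hgrid, Finset.mem_filter, Finset.mem_product, Finset.mem_range, Finset.mem_range] at hp ⊢
      rw [hcC] at hp; rw [hcB]
      simp only
      omega
    · intro p hp
      rw [hgrid, Finset.mem_filter, Finset.mem_product, Finset.mem_range, Finset.mem_range] at hp ⊢
      rw [hcB] at hp; rw [hcC]
      simp only
      omega
    · intro p hp
      rw [hgrid, Finset.mem_filter, Finset.mem_product, Finset.mem_range, Finset.mem_range, hcC] at hp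
      ext <;> simp <;> omega
    · intro p hp
      rw [hgrid, Finset.mem_filter, Finset.mem_product, Finset.mem_range, Finset.mem_range, hcB] at hp
      ext <;> simp <;> omega
    · intro p hp
      rw [hgrid, Finset.mem_filter, Finset.mem_product, Finset.mem_range, Finset.mem_range, hcC] at hp
      exact (FSU3_refl n hn0 p (by omega) (by omega) (by omega)).symm
  have := hfull
  rw [hsplit, Finset.sum_union hdisj, hCB, hG] at this
  linarith

/-- The quantum number `[m] = sin(mπ/(k+3))/sin(π/(k+3))` occurring in the
quantum dimensions of the simple objects of `A_k(SU(3))`. -/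
noncomputable def qnSU3 (k m : ℕ) : ℝ :=
  Real.sin ((m : ℝ) * Real.pi / ((k : ℝ) + 3)) / Real.sin (Real.pi / ((k : ℝ) + 3))

/-- The global dimension of the fusion category `A_k(SU(3))`: the sum over
dominant weights `(a,b)` with `a + b ≤ k` of the square of the quantum
dimension `[a+1][b+1][a+b+2]/[2]` equals
`3(k+3)² / (2⁶ · sin⁴(π/(k+3)) · sin²(2π/(k+3)))`. -/
theorem globalDim_Ak_SU3 (k : ℕ) :
    ∑ p ∈ (Finset.range (k + 1) ×ˢ Finset.range (k + 1)).filter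
        (fun p => p.1 + p.2 ≤ k),
      (qnSU3 k (p.1 + 1) * qnSU3 k (p.2 + 1) * qnSU3 k (p.1 + p.2 + 2) / qnSU3 k 2) ^ 2
    = 3 * ((k : ℝ) + 3) ^ 2 /
        (2 ^ 6 * Real.sin (π / ((k : ℝ) + 3)) ^ 4 *
          Real.sin (2 * π / ((k : ℝ) + 3)) ^ 2) := by
  have hN : (0:ℝ) < (k:ℝ) + 3 := by positivity
  have h3 : (3:ℝ) ≤ (k:ℝ) + 3 := by
    have : (0:ℝ) ≤ (k:ℝ) := Nat.cast_nonneg k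
    linarith
  have hθpos : 0 < π / ((k:ℝ) + 3) := by positivity
  have hθlt : π / ((k:ℝ) + 3) < π := by
    rw [div_lt_iff₀ hN]
    nlinarith [Real.pi_pos]
  have hs1 : Real.sin (π / ((k:ℝ) + 3)) ≠ 0 :=
    (Real.sin_pos_of_pos_of_lt_pi hθpos hθlt).ne'
  have h2θpos : 0 < 2 * π / ((k:ℝ) + 3) := by positivity
  have h2θlt : 2 * π / ((k:ℝ) + 3) < π := by
    rw [div_lt_iff₀ hN]
    nlinarith [Real.pi_pos]
  have hs2 : Real.sin (2 * π / ((k:ℝ) + 3)) ≠ 0 :=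
    (Real.sin_pos_of_pos_of_lt_pi h2θpos h2θlt).ne'
  have hterm : ∀ p ∈ (Finset.range (k + 1) ×ˢ Finset.range (k + 1)).filter
      (fun p => p.1 + p.2 ≤ k),
      (qnSU3 k (p.1 + 1) * qnSU3 k (p.2 + 1) * qnSU3 k (p.1 + p.2 + 2) / qnSU3 k 2) ^ 2
      = FSU3 (k+3) (p.1+1, p.2+1) /
          (Real.sin (π / ((k:ℝ) + 3)) ^ 4 * Real.sin (2 * π / ((k:ℝ) + 3)) ^ 2) := by
    intro p _
    unfold qnSU3 FSU3
    simp only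
    push_cast
    rw [show ((k:ℝ)+3) = ((k:ℝ)+3) from rfl]
    have e2 : ((2:ℝ)) * π / ((k:ℝ)+3) = 2 * π / ((k:ℝ)+3) := rfl
    field_simp
    ring
  rw [Finset.sum_congr rfl hterm, ← Finset.sum_div]
  have hre : ∑ p ∈ (Finset.range (k + 1) ×ˢ Finset.range (k + 1)).filter
      (fun p => p.1 + p.2 ≤ k), FSU3 (k+3) (p.1+1, p.2+1)
      = ∑ p ∈ (Finset.range (k+3) ×ˢ Finset.range (k+3)).filter
        (fun p => 0 < p.1 ∧ 0 < p.2 ∧ p.1 + p.2 < k+3), FSU3 (k+3) p := by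
    refine Finset.sum_nbij' (fun p => (p.1+1, p.2+1)) (fun p => (p.1-1, p.2-1))
      ?_ ?_ ?_ ?_ ?_
    · intro p hp
      simp only [Finset.mem_filter, Finset.mem_product, Finset.mem_range] at hp ⊢
      omega
    · intro p hp
      simp only [Finset.mem_filter, Finset.mem_product, Finset.mem_range] at hp ⊢
      omega
    · intro p hp
      simp only [Finset.mem_filter, Finset.mem_product, Finset.mem_range] at hp
      ext <;> simp <;> omega
    · intro p hp
      simp only [Finset.mem_filter, Finset.mem_product, Finset.mem_range] at hp
      ext <;> simp <;> omega
    · intro p _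
      rfl
  rw [hre, tri_sum (k+3) (by omega)]
  push_cast
  field_simp
  ring
end

section
/- Level-rank duality for global dimensions: for all integers N ≥ 1 and k ≥ 1, k · ( N(k+N)^{N−1} / ( 2^{N(N−1)} · ∏_{s=1}^{N−1} sin^{2(N−s)}(πs/(k+N)) ) ) = N · ( k(k+N)^{k−1} / ( 2^{k(k−1)} · ∏_{s=1}^{k−1} sin^{2(k−s)}(πs/(k+N)) ) ). Equivalently, k·|A_k(SU(N))| = N·|A_N(SU(k))|, where |A_k(SU(N))| denotes the displayed closed-form expression for the global dimension of A_k(SU(N)). -/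
open Real Finset Polynomial

lemma lr_abs_one_sub_exp (θ : ℝ) :
    ‖1 - Complex.exp (θ * Complex.I)‖ = 2 * |Real.sin (θ / 2)| := by
  rw [Complex.norm_def, Complex.normSq_apply]
  have hre : (1 - Complex.exp (θ * Complex.I)).re = 1 - Real.cos θ := by
    simp [Complex.exp_ofReal_mul_I_re]
  have him : (1 - Complex.exp (θ * Complex.I)).im = -Real.sin θ := by
    simp [Complex.exp_ofReal_mul_I_im]
  rw [hre, him]
  have hc : Real.cos θ = 1 - 2 * Real.sin (θ / 2) ^ 2 := by
    have h1 : Real.cos (2 * (θ / 2)) = Real.cos (θ/2) ^ 2 - Real.sin (θ/2) ^ 2 :=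
      Real.cos_two_mul' _
    have h2 : Real.sin (θ/2) ^ 2 + Real.cos (θ/2) ^ 2 = 1 := Real.sin_sq_add_cos_sq _
    have : (2 : ℝ) * (θ / 2) = θ := by ring
    rw [this] at h1
    nlinarith
  have h2 : Real.sin θ ^ 2 + Real.cos θ ^ 2 = 1 := Real.sin_sq_add_cos_sq _
  have key : (1 - Real.cos θ) * (1 - Real.cos θ) + -Real.sin θ * -Real.sin θ
      = (2 * |Real.sin (θ / 2)|) ^ 2 := by
    have : |Real.sin (θ/2)| ^ 2 = Real.sin (θ/2) ^ 2 := sq_abs _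
    nlinarith
  rw [key, Real.sqrt_sq (by positivity)]

lemma lr_prod_one_sub_pow (n : ℕ) (hn : 1 ≤ n) :
    ∏ s ∈ Icc 1 (n-1), ((1 : ℂ) - Complex.exp (2 * π * Complex.I / n) ^ s) = n := by
  haveI : NeZero n := ⟨by omega⟩
  set ζ : ℂ := Complex.exp (2 * π * Complex.I / n) with hζdef
  have hζ : IsPrimitiveRoot ζ n := Complex.isPrimitiveRoot_exp n (by omega)
  have h1 : (X ^ n - 1 : ℂ[X]) = ∏ i ∈ range n, (X - C (ζ ^ i)) := by
    rw [Polynomial.X_pow_sub_one_eq_prod (by omega) hζ]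
    refine (Finset.prod_bij (fun i _ => ζ ^ i) ?_ ?_ ?_ ?_).symm
    · intro a ha
      rw [Polynomial.mem_nthRootsFinset (by omega)]
      rw [← pow_mul, mul_comm, pow_mul, hζ.pow_eq_one, one_pow]
    · intro a ha b hb hab
      exact hζ.pow_inj (mem_range.1 ha) (mem_range.1 hb) hab
    · intro b hb
      rw [Polynomial.mem_nthRootsFinset (by omega)] at hb
      obtain ⟨i, hik, hi⟩ := hζ.eq_pow_of_pow_eq_one hb
      exact ⟨i, mem_range.2 hik, hi⟩
    · intro a ha; rfl
  have h2 : ((∑ i ∈ range n, (X : ℂ[X]) ^ i) * (X - 1)) = X ^ n - 1 := geom_sum_mul _ n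
  have hsplit : range n = insert 0 (Icc 1 (n-1)) := by
    ext x; simp only [mem_range, mem_insert, mem_Icc]; omega
  have h3 : (X ^ n - 1 : ℂ[X]) = (X - 1) * ∏ i ∈ Icc 1 (n-1), (X - C (ζ ^ i)) := by
    rw [h1, hsplit, Finset.prod_insert (by simp)]
    simp
  have hX : (X - 1 : ℂ[X]) ≠ 0 := by
    have := Polynomial.X_sub_C_ne_zero (1 : ℂ)
    simpa using this
  have h4 : (∑ i ∈ range n, (X : ℂ[X]) ^ i) = ∏ i ∈ Icc 1 (n-1), (X - C (ζ ^ i)) := by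
    apply mul_right_cancel₀ hX
    rw [h2, h3]; ring
  have h5 := congrArg (Polynomial.eval 1) h4
  simp only [Polynomial.eval_finset_sum, Polynomial.eval_pow, Polynomial.eval_X, one_pow,
    Polynomial.eval_prod, Polynomial.eval_sub, Polynomial.eval_C, Finset.sum_const,
    Finset.card_range, nsmul_eq_mul, mul_one] at h5
  exact h5.symm

lemma lr_prod_two_sin (n : ℕ) (hn : 1 ≤ n) :
    ∏ s ∈ Icc 1 (n-1), (2 * Real.sin (π * s / n)) = n := by
  have h := congrArg (norm : ℂ → ℝ) (lr_prod_one_sub_pow n hn)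
  rw [Complex.norm_prod, Complex.norm_natCast] at h
  have h2 : ∏ s ∈ Icc 1 (n-1), (2 * Real.sin (π * s / n))
      = ∏ s ∈ Icc 1 (n-1), ‖1 - Complex.exp (2 * π * Complex.I / n) ^ s‖ := by
    apply Finset.prod_congr rfl
    intro s hs
    rw [mem_Icc] at hs
    have hpow : Complex.exp (2 * π * Complex.I / n) ^ s
        = Complex.exp (((2 * π * s / n : ℝ) : ℂ) * Complex.I) := by
      rw [← Complex.exp_nat_mul]
      congr 1
      push_cast
      ring
    rw [hpow, lr_abs_one_sub_exp]
    have hs' : Real.sin (2 * π * s / n / 2) = Real.sin (π * s / n) := by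
      congr 1; ring
    rw [hs', abs_of_nonneg]
    apply Real.sin_nonneg_of_nonneg_of_le_pi
    · positivity
    · rw [div_le_iff₀ (by positivity)]
      have : (s : ℝ) ≤ (n : ℝ) := by exact_mod_cast (by omega : s ≤ n)
      nlinarith [Real.pi_pos]
  rw [h2, h]

open Real Finset

noncomputable def lrF (n s : ℕ) : ℝ := 2 * Real.sin (π * s / n)

def lrDist (n i j : ℕ) : ℕ := if i ≤ j then j - i else n - (i - j)

lemma lrF_sub (n d : ℕ) (hn : 1 ≤ n) (hd : d ≤ n) : lrF n (n - d) = lrF n d := by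
  unfold lrF
  congr 1
  have h1 : ((n - d : ℕ) : ℝ) = (n : ℝ) - d := by
    push_cast [Nat.cast_sub hd]; ring
  have hn0 : (n : ℝ) ≠ 0 := by positivity
  have : π * ((n - d : ℕ) : ℝ) / n = π - π * d / n := by
    rw [h1]; field_simp
  rw [this, Real.sin_pi_sub]

lemma lrF_symm (n : ℕ) {i j : ℕ} (hi : i < n) (hj : j < n) :
    lrF n (lrDist n j i) = lrF n (lrDist n i j) := by
  rcases Nat.lt_trichotomy i j with h | h | h
  · have h1 : lrDist n i j = j - i := by unfold lrDist; rw [if_pos (by omega)]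
    have h2 : lrDist n j i = n - (j - i) := by unfold lrDist; rw [if_neg (by omega)]
    rw [h1, h2, lrF_sub n _ (by omega) (by omega)]
  · subst h; rfl
  · have h1 : lrDist n j i = i - j := by unfold lrDist; rw [if_pos (by omega)]
    have h2 : lrDist n i j = n - (i - j) := by unfold lrDist; rw [if_neg (by omega)]
    rw [h1, h2, lrF_sub n _ (by omega) (by omega)]

lemma lrDist_shift (n t i j : ℕ) : lrDist n (i + t) (j + t) = lrDist n i j := by
  unfold lrDist
  rcases le_or_gt i j with h | h
  · rw [if_pos (by omega), if_pos h]; omega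
  · rw [if_neg (by omega), if_neg (by omega)]; congr 1; omega

lemma lrRow (n : ℕ) {i : ℕ} (hi : i < n) :
    ∏ j ∈ (range n).erase i, lrF n (lrDist n i j) = ∏ s ∈ Icc 1 (n-1), lrF n s := by
  have hmod : ∀ s, 1 ≤ s → s ≤ n - 1 →
      (i + s) % n = if i + s < n then i + s else i + s - n := by
    intro s h1 h2
    split_ifs with h
    · exact Nat.mod_eq_of_lt h
    · rw [Nat.mod_eq_sub_mod (by omega), Nat.mod_eq_of_lt (by omega)]
  apply Finset.prod_nbij' (fun j => lrDist n i j) (fun s => (i + s) % n)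
  · intro j hj
    rw [mem_erase, mem_range] at hj
    rw [mem_Icc]
    unfold lrDist
    split_ifs <;> omega
  · intro s hs
    rw [mem_Icc] at hs
    rw [mem_erase, mem_range, hmod s hs.1 hs.2]
    split_ifs <;> omega
  · intro j hj
    rw [mem_erase, mem_range] at hj
    unfold lrDist
    split_ifs with h
    · rw [hmod _ (by omega) (by omega), if_pos (by omega)]; omega
    · rw [hmod _ (by omega) (by omega), if_neg (by omega)]; omega
  · intro s hs
    rw [mem_Icc] at hs
    rw [hmod s hs.1 hs.2]
    unfold lrDist
    split_ifs <;> omega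
  · intro j hj; rfl

noncomputable def lrD (n m : ℕ) : ℝ :=
  ∏ i ∈ range m, ∏ j ∈ (range m).erase i, lrF n (lrDist n i j)

lemma lrD_eq (n : ℕ) : ∀ m, m ≤ n → lrD n m = ∏ d ∈ Icc 1 (m-1), lrF n d ^ (2*(m-d)) := by
  intro m
  induction m with
  | zero => intro _; simp [lrD]
  | succ m ih =>
    intro hm
    rcases Nat.eq_zero_or_pos m with rfl | hm1
    · simp [lrD]
    have ih' := ih (by omega)
    have e1 : (insert m (range m)).erase m = range m := by
      ext x; simp only [mem_erase, mem_range, mem_insert]; omega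
    have e2 : ∀ i ∈ range m, (insert m (range m)).erase i = insert m ((range m).erase i) := by
      intro i hi
      rw [mem_range] at hi
      ext x; simp only [mem_erase, mem_range, mem_insert]; omega
    have step : lrD n (m+1)
        = lrD n m * ∏ i ∈ range m, (lrF n (lrDist n m i) * lrF n (lrDist n i m)) := by
      unfold lrD
      rw [Finset.range_add_one, Finset.prod_insert (by simp), e1]
      have e3 : ∏ x ∈ range m, ∏ j ∈ (insert m (range m)).erase x, lrF n (lrDist n x j)
          = ∏ x ∈ range m,
              (lrF n (lrDist n x m) * ∏ j ∈ (range m).erase x, lrF n (lrDist n x j)) := by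
        apply Finset.prod_congr rfl
        intro i hi
        rw [e2 i hi, Finset.prod_insert (by simp)]
      rw [e3, Finset.prod_mul_distrib, Finset.prod_mul_distrib]
      ring
    have step2 : ∀ i ∈ range m, lrF n (lrDist n m i) * lrF n (lrDist n i m)
        = lrF n (m - i) ^ 2 := by
      intro i hi
      rw [mem_range] at hi
      have h1 : lrDist n i m = m - i := by unfold lrDist; rw [if_pos (by omega)]
      rw [lrF_symm n (by omega) (by omega), h1, sq]
    rw [step, Finset.prod_congr rfl step2, ih']
    have reidx : ∏ i ∈ range m, lrF n (m - i) ^ 2 = ∏ d ∈ Icc 1 m, lrF n d ^ 2 := by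
      apply Finset.prod_nbij' (fun i => m - i) (fun d => m - d)
      · intro a ha; rw [mem_range] at ha; rw [mem_Icc]; omega
      · intro a ha; rw [mem_Icc] at ha; rw [mem_range]; omega
      · intro a ha; rw [mem_range] at ha; omega
      · intro a ha; rw [mem_Icc] at ha; omega
      · intro a ha; rfl
    rw [reidx]
    have ext1 : ∏ d ∈ Icc 1 (m-1), lrF n d ^ (2*(m-d))
        = ∏ d ∈ Icc 1 m, lrF n d ^ (2*(m-d)) := by
      have : Icc 1 m = insert m (Icc 1 (m-1)) := by
        ext x; simp only [mem_Icc, mem_insert]; omega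
      rw [this, Finset.prod_insert (by simp [mem_Icc]; omega)]
      simp
    rw [ext1, ← Finset.prod_mul_distrib]
    have : m + 1 - 1 = m := by omega
    rw [this]
    apply Finset.prod_congr rfl
    intro d hd
    rw [mem_Icc] at hd
    rw [← pow_add]
    congr 1
    omega

lemma lr_cross_eq (n : ℕ) (hn : 1 ≤ n) : ∀ m, m ≤ n →
    ∏ i ∈ Ico m n, ∏ j ∈ (Ico m n).erase i, lrF n (lrDist n i j) = lrD n (n - m) := by
  intro m hm
  unfold lrD
  apply Finset.prod_nbij' (fun i => i - m) (fun i => m + i)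
  · intro a ha; rw [mem_Ico] at ha; rw [mem_range]; omega
  · intro a ha; rw [mem_range] at ha; rw [mem_Ico]; omega
  · intro a ha; rw [mem_Ico] at ha; omega
  · intro a ha; omega
  · intro a ha
    rw [mem_Ico] at ha
    apply Finset.prod_nbij' (fun j => j - m) (fun j => m + j)
    · intro b hb; rw [mem_erase, mem_Ico] at hb; rw [mem_erase, mem_range]; omega
    · intro b hb; rw [mem_erase, mem_range] at hb; rw [mem_erase, mem_Ico]; omega
    · intro b hb; rw [mem_erase, mem_Ico] at hb; omega
    · intro b hb; omega
    · intro b hb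
      rw [mem_erase, mem_Ico] at hb
      have h1 : a = (a - m) + m := by omega
      have h2 : b = (b - m) + m := by omega
      rw [h1, h2, lrDist_shift]
      congr 2 <;> omega

lemma lrMain (N k : ℕ) (hN : 1 ≤ N) (hk : 1 ≤ k) :
    ((N + k : ℕ) : ℝ) ^ N * lrD (N + k) k = ((N + k : ℕ) : ℝ) ^ k * lrD (N + k) N := by
  set n := N + k with hn
  have hn1 : 1 ≤ n := by omega
  have rowval : ∀ i, i < n →
      ∏ j ∈ (range n).erase i, lrF n (lrDist n i j) = (n : ℝ) := by
    intro i hi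
    rw [lrRow n hi]
    exact lr_prod_two_sin n hn1
  -- split for i < N
  have splitA : ∀ i ∈ range N, (range n).erase i = ((range N).erase i) ∪ Ico N n := by
    intro i hi; rw [mem_range] at hi
    ext x; simp only [mem_erase, mem_range, mem_union, mem_Ico]; omega
  have disjA : ∀ i ∈ range N, Disjoint ((range N).erase i) (Ico N n) := by
    intro i hi
    rw [Finset.disjoint_left]
    intro x hx hx'
    rw [mem_erase, mem_range] at hx
    rw [mem_Ico] at hx'
    omega
  have eqA : (n : ℝ) ^ N = lrD n N *
      ∏ i ∈ range N, ∏ j ∈ Ico N n, lrF n (lrDist n i j) := by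
    have h1 : ∏ i ∈ range N, ∏ j ∈ (range n).erase i, lrF n (lrDist n i j)
        = (n : ℝ) ^ N := by
      rw [Finset.prod_congr rfl (fun i hi => rowval i (by rw [mem_range] at hi; omega))]
      simp
    rw [← h1]
    rw [Finset.prod_congr rfl (fun i hi => by
      rw [splitA i hi, Finset.prod_union (disjA i hi)])]
    rw [Finset.prod_mul_distrib]
    rfl
  -- split for i ∈ Ico N n
  have splitB : ∀ i ∈ Ico N n, (range n).erase i = range N ∪ ((Ico N n).erase i) := by
    intro i hi; rw [mem_Ico] at hi
    ext x; simp only [mem_erase, mem_range, mem_union, mem_Ico]; omega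
  have disjB : ∀ i ∈ Ico N n, Disjoint (range N) ((Ico N n).erase i) := by
    intro i hi
    rw [Finset.disjoint_left]
    intro x hx hx'
    rw [mem_range] at hx
    rw [mem_erase, mem_Ico] at hx'
    omega
  have eqB : (n : ℝ) ^ k = lrD n k *
      ∏ i ∈ Ico N n, ∏ j ∈ range N, lrF n (lrDist n i j) := by
    have h1 : ∏ i ∈ Ico N n, ∏ j ∈ (range n).erase i, lrF n (lrDist n i j)
        = (n : ℝ) ^ k := by
      rw [Finset.prod_congr rfl (fun i hi => rowval i (by rw [mem_Ico] at hi; omega))]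
      simp [Nat.card_Ico]
      congr 1
      omega
    rw [← h1]
    rw [Finset.prod_congr rfl (fun i hi => by
      rw [splitB i hi, Finset.prod_union (disjB i hi)])]
    rw [Finset.prod_mul_distrib]
    have h2 : ∏ i ∈ Ico N n, ∏ j ∈ (Ico N n).erase i, lrF n (lrDist n i j)
        = lrD n k := by
      have := lr_cross_eq n hn1 N (by omega)
      rwa [show n - N = k by omega] at this
    rw [h2]
    ring
  -- the two cross products agree
  have cross : ∏ i ∈ range N, ∏ j ∈ Ico N n, lrF n (lrDist n i j)
      = ∏ i ∈ Ico N n, ∏ j ∈ range N, lrF n (lrDist n i j) := by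
    rw [Finset.prod_comm]
    apply Finset.prod_congr rfl
    intro j hj
    apply Finset.prod_congr rfl
    intro i hi
    rw [mem_Ico] at hj
    rw [mem_range] at hi
    exact (lrF_symm n (by omega) (by omega)).symm
  calc (n : ℝ) ^ N * lrD n k
      = lrD n N * (∏ i ∈ range N, ∏ j ∈ Ico N n, lrF n (lrDist n i j)) * lrD n k := by
        rw [← eqA]
    _ = lrD n N * ((n : ℝ) ^ k) := by rw [cross, mul_assoc, mul_comm _ (lrD n k), ← eqB]
    _ = (n : ℝ) ^ k * lrD n N := by ring

lemma lr_sum (m : ℕ) : ∑ d ∈ Icc 1 (m-1), 2*(m-d) = m*(m-1) := by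
  rcases Nat.eq_zero_or_pos m with rfl | hm
  · simp
  have h1 : ∑ d ∈ Icc 1 (m-1), 2*(m-d) = ∑ d ∈ Icc 1 (m-1), 2*d := by
    apply Finset.sum_nbij' (fun d => m - d) (fun d => m - d)
    · intro a ha; rw [mem_Icc] at ha ⊢; omega
    · intro a ha; rw [mem_Icc] at ha ⊢; omega
    · intro a ha; rw [mem_Icc] at ha; omega
    · intro a ha; rw [mem_Icc] at ha; omega
    · intro a ha; rfl
  have h2 : range m = insert 0 (Icc 1 (m-1)) := by
    ext x; simp only [mem_range, mem_insert, mem_Icc]; omega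
  have h3 := Finset.sum_range_id_mul_two m
  rw [h2, Finset.sum_insert (by simp)] at h3
  rw [h1, ← Finset.mul_sum]
  omega

lemma lrD_to_E (n m : ℕ) (hm : m ≤ n) :
    lrD n m = 2 ^ (m*(m-1)) *
      ∏ s ∈ Icc 1 (m-1), Real.sin (π * s / n) ^ (2*(m-s)) := by
  rw [lrD_eq n m hm]
  have : ∀ d ∈ Icc 1 (m-1), lrF n d ^ (2*(m-d))
      = 2 ^ (2*(m-d)) * Real.sin (π * d / n) ^ (2*(m-d)) := by
    intro d hd
    rw [lrF, mul_pow]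
  rw [Finset.prod_congr rfl this, Finset.prod_mul_distrib,
    Finset.prod_pow_eq_pow_sum, lr_sum]

/-- Level-rank duality for global dimensions of `A_k(SU(N))`:
`k·|A_k(SU(N))| = N·|A_N(SU(k))|`, where `|A_k(SU(N))|` is the closed-form
expression `N(k+N)^{N−1} / (2^{N(N−1)} · ∏_{s=1}^{N−1} sin^{2(N−s)}(πs/(k+N)))`. -/
theorem levelRankDuality_globalDim (N k : ℕ) (hN : 1 ≤ N) (hk : 1 ≤ k) :
    (k : ℝ) *
      ((N : ℝ) * ((k : ℝ) + N) ^ (N - 1) /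
        (2 ^ (N * (N - 1)) *
          ∏ s ∈ Finset.Icc 1 (N - 1),
            Real.sin (π * (s : ℝ) / ((k : ℝ) + N)) ^ (2 * (N - s))))
    = (N : ℝ) *
      ((k : ℝ) * ((k : ℝ) + N) ^ (k - 1) /
        (2 ^ (k * (k - 1)) *
          ∏ s ∈ Finset.Icc 1 (k - 1),
            Real.sin (π * (s : ℝ) / ((k : ℝ) + N)) ^ (2 * (k - s)))) := by
  set n := N + k with hndef
  have hcast : (k : ℝ) + N = ((n : ℕ) : ℝ) := by rw [hndef]; push_cast; ring
  rw [hcast]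
  have hEN : (2:ℝ) ^ (N * (N - 1)) *
      ∏ s ∈ Finset.Icc 1 (N - 1), Real.sin (π * (s : ℝ) / (n:ℝ)) ^ (2 * (N - s))
      = lrD n N := (lrD_to_E n N (by omega)).symm
  have hEk : (2:ℝ) ^ (k * (k - 1)) *
      ∏ s ∈ Finset.Icc 1 (k - 1), Real.sin (π * (s : ℝ) / (n:ℝ)) ^ (2 * (k - s))
      = lrD n k := (lrD_to_E n k (by omega)).symm
  rw [hEN, hEk]
  -- positivity of lrD
  have hpos : ∀ m, 1 ≤ m → m ≤ n → 0 < lrD n m := by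
    intro m hm1 hm2
    rw [lrD_to_E n m hm2]
    apply mul_pos (by positivity)
    apply Finset.prod_pos
    intro s hs
    rw [mem_Icc] at hs
    apply pow_pos
    apply Real.sin_pos_of_pos_of_lt_pi
    · have : (0:ℝ) < (s:ℝ) := by exact_mod_cast hs.1
      positivity
    · rw [div_lt_iff₀ (by positivity : (0:ℝ) < (n:ℝ))]
      have hsn : (s : ℝ) < (n : ℝ) := by exact_mod_cast (by omega : s < n)
      nlinarith [Real.pi_pos]
  have hDN := hpos N hN (by omega)
  have hDk := hpos k hk (by omega)
  have h := lrMain N k hN hk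
  rw [← hndef] at h
  have hnne : ((n:ℕ) : ℝ) ≠ 0 := by
    have : (0:ℕ) < n := by omega
    positivity
  have hcancel : ((n:ℕ):ℝ) ^ (N-1) * lrD n k = ((n:ℕ):ℝ) ^ (k-1) * lrD n N := by
    apply mul_right_cancel₀ hnne
    have e1 : ((n:ℕ):ℝ) ^ N = ((n:ℕ):ℝ) ^ (N-1) * ((n:ℕ):ℝ) := by
      rw [← pow_succ]; congr 1; omega
    have e2 : ((n:ℕ):ℝ) ^ k = ((n:ℕ):ℝ) ^ (k-1) * ((n:ℕ):ℝ) := by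
      rw [← pow_succ]; congr 1; omega
    rw [e1, e2] at h
    calc ((n:ℕ):ℝ) ^ (N-1) * lrD n k * ((n:ℕ):ℝ)
        = ((n:ℕ):ℝ) ^ (N-1) * ((n:ℕ):ℝ) * lrD n k := by ring
      _ = ((n:ℕ):ℝ) ^ (k-1) * ((n:ℕ):ℝ) * lrD n N := h
      _ = ((n:ℕ):ℝ) ^ (k-1) * lrD n N * ((n:ℕ):ℝ) := by ring
  field_simp
  linear_combination hcancel
end

section
/- Classical limit of the global dimension for SU(N): fix an integer N ≥ 2 and set sf(m) = ∏_{s=1}^{m} s!. Then, as k → ∞ along the natural numbers, the ratio ( N(k+N)^{N−1} / ( 2^{N(N−1)} · ∏_{s=1}^{N−1} sin^{2(N−s)}(πs/(k+N)) ) ) ÷ ( N·k^{N²−1} / ( (2π)^{N(N−1)} · sf(N−1)² ) ) tends to 1. In other words, |A_k(SU(N))| ∼ N·k^{N²−1} / ( (2π)^{N(N−1)} · sf(N−1)² ) as k → ∞. -/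
open Real Finset Filter


private lemma aux_sum (m : ℕ) : ∑ s ∈ Finset.Icc 1 m, 2 * (m + 1 - s) = (m + 1) * m := by
  induction m with
  | zero => simp
  | succ m ih =>
    rw [Finset.sum_Icc_succ_top (by omega : 1 ≤ m + 1)]
    have h : ∑ s ∈ Finset.Icc 1 m, 2 * (m + 1 + 1 - s) =
        ∑ s ∈ Finset.Icc 1 m, (2 * (m + 1 - s) + 2) := by
      refine Finset.sum_congr rfl fun s hs => ?_
      simp only [Finset.mem_Icc] at hs
      omega
    rw [h, Finset.sum_add_distrib, ih, Finset.sum_const, Nat.card_Icc]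
    simp only [smul_eq_mul]
    have : m + 1 - 1 = m := by omega
    rw [this]
    have h2 : m + 1 + 1 - (m + 1) = 1 := by omega
    rw [h2]
    ring

private lemma aux_fac (m : ℕ) : ∏ s ∈ Finset.Icc 1 m, s = Nat.factorial m := by
  induction m with
  | zero => simp
  | succ m ih2 =>
    rw [Finset.prod_Icc_succ_top (by omega : 1 ≤ m + 1), ih2, Nat.factorial_succ]
    ring

private lemma aux_prod (m : ℕ) :
    ∏ s ∈ Finset.Icc 1 m, s ^ (m + 1 - s) = ∏ s ∈ Finset.Icc 1 m, Nat.factorial s := by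
  induction m with
  | zero => simp
  | succ m ih =>
    rw [Finset.prod_Icc_succ_top (by omega : 1 ≤ m + 1),
        Finset.prod_Icc_succ_top (by omega : 1 ≤ m + 1)]
    have h : ∏ s ∈ Finset.Icc 1 m, s ^ (m + 1 + 1 - s) =
        (∏ s ∈ Finset.Icc 1 m, s ^ (m + 1 - s)) * ∏ s ∈ Finset.Icc 1 m, s := by
      rw [← Finset.prod_mul_distrib]
      refine Finset.prod_congr rfl fun s hs => ?_
      simp only [Finset.mem_Icc] at hs
      rw [← pow_succ]
      congr 1
      omega
    have hfac : ∏ s ∈ Finset.Icc 1 m, s = Nat.factorial m := aux_fac m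
    have h2 : m + 1 + 1 - (m + 1) = 1 := by omega
    rw [h, ih, hfac, h2, pow_one]
    have hlast : (∏ s ∈ Finset.Icc 1 m, Nat.factorial s) * Nat.factorial m * (m+1)
        = (∏ s ∈ Finset.Icc 1 m, Nat.factorial s) * Nat.factorial (m+1) := by
      rw [Nat.factorial_succ]; ring
    rw [mul_assoc] at hlast ⊢
    rw [hlast]

private lemma sin_div_limit (c : ℝ) (hc : 0 < c) (a : ℝ) (ha : 0 < a) :
    Tendsto (fun k : ℕ => (c / ((k : ℝ) + a)) / Real.sin (c / ((k : ℝ) + a)))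
      atTop (nhds 1) := by
  have hx : Tendsto (fun k : ℕ => (k : ℝ) + a) atTop atTop :=
    tendsto_atTop_add_const_right atTop a tendsto_natCast_atTop_atTop
  have ht : Tendsto (fun k : ℕ => c / ((k : ℝ) + a)) atTop (nhds 0) :=
    tendsto_const_nhds.div_atTop hx
  have ht' : Tendsto (fun k : ℕ => c / ((k : ℝ) + a)) atTop (nhdsWithin 0 {0}ᶜ) := by
    refine tendsto_nhdsWithin_of_tendsto_nhds_of_eventually_within _ ht ?_
    filter_upwards [hx.eventually_gt_atTop 0] with k hk
    exact ne_of_gt (div_pos hc hk)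
  have hderiv : HasDerivAt Real.sin 1 0 := by simpa using Real.hasDerivAt_sin 0
  have hslope := hasDerivAt_iff_tendsto_slope.mp hderiv
  have h1 : Tendsto (fun y : ℝ => Real.sin y / y) (nhdsWithin 0 {0}ᶜ) (nhds 1) := by
    refine hslope.congr' ?_
    filter_upwards [self_mem_nhdsWithin] with y _
    simp [slope_def_field]
  have h2 : Tendsto (fun k : ℕ => Real.sin (c / ((k : ℝ) + a)) / (c / ((k : ℝ) + a)))
      atTop (nhds 1) := h1.comp ht'
  have h3 := h2.inv₀ one_ne_zero
  simp only [inv_div, inv_one] at h3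
  exact h3

/-- Classical limit of the global dimension of `A_k(SU(N))`: for fixed `N ≥ 2`,
as `k → ∞`, the ratio of `|A_k(SU(N))|` (in its closed form) to
`N·k^{N²−1}/((2π)^{N(N−1)}·sf(N−1)²)`, where `sf(m) = ∏_{s=1}^m s!`,
tends to `1`. -/
theorem globalDim_Ak_SUN_classical_limit (N : ℕ) (hN : 2 ≤ N) :
    Filter.Tendsto
      (fun k : ℕ =>
        ((N : ℝ) * ((k : ℝ) + N) ^ (N - 1) /
          (2 ^ (N * (N - 1)) *
            ∏ s ∈ Finset.Icc 1 (N - 1),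
              Real.sin (π * (s : ℝ) / ((k : ℝ) + N)) ^ (2 * (N - s)))) /
        ((N : ℝ) * (k : ℝ) ^ (N ^ 2 - 1) /
          ((2 * π) ^ (N * (N - 1)) *
            ((∏ s ∈ Finset.Icc 1 (N - 1), Nat.factorial s : ℕ) : ℝ) ^ 2)))
      Filter.atTop (nhds 1) := by
  obtain ⟨m, rfl⟩ : ∃ m, N = m + 1 := ⟨N - 1, by omega⟩
  have hm1 : m + 1 - 1 = m := by omega
  -- the auxiliary function with the same limit
  have hg : Tendsto (fun k : ℕ =>
      (((k : ℝ) + (m + 1 : ℕ)) / (k : ℝ)) ^ ((m + 1) ^ 2 - 1) *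
      ∏ s ∈ Finset.Icc 1 m,
        ((π * (s : ℝ) / ((k : ℝ) + (m + 1 : ℕ))) /
          Real.sin (π * (s : ℝ) / ((k : ℝ) + (m + 1 : ℕ)))) ^ (2 * (m + 1 - s)))
      atTop (nhds 1) := by
    have h1 : Tendsto (fun k : ℕ => ((k : ℝ) + (m + 1 : ℕ)) / (k : ℝ)) atTop (nhds 1) := by
      have hbase : Tendsto (fun k : ℕ => 1 + ((m + 1 : ℕ) : ℝ) / (k : ℝ)) atTop (nhds 1) := by
        simpa using tendsto_const_nhds.add
          (tendsto_const_div_atTop_nhds_zero_nat ((m + 1 : ℕ) : ℝ))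
      refine hbase.congr' ?_
      filter_upwards [eventually_ge_atTop 1] with k hk
      have hk0 : (k : ℝ) ≠ 0 := by positivity
      field_simp
    have hprod : Tendsto (fun k : ℕ =>
        ∏ s ∈ Finset.Icc 1 m,
          ((π * (s : ℝ) / ((k : ℝ) + (m + 1 : ℕ))) /
            Real.sin (π * (s : ℝ) / ((k : ℝ) + (m + 1 : ℕ)))) ^ (2 * (m + 1 - s)))
        atTop (nhds (∏ s ∈ Finset.Icc 1 m, (1 : ℝ))) := by
      refine tendsto_finset_prod _ fun s hs => ?_
      simp only [Finset.mem_Icc] at hs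
      have hc : (0 : ℝ) < π * (s : ℝ) := by
        have : (0:ℝ) < (s:ℝ) := by exact_mod_cast hs.1
        positivity
      have := (sin_div_limit (π * (s : ℝ)) hc ((m + 1 : ℕ) : ℝ) (by positivity)).pow
        (2 * (m + 1 - s))
      simpa [mul_div_assoc] using this
    have := (h1.pow ((m + 1) ^ 2 - 1)).mul hprod
    simpa using this
  refine hg.congr' ?_
  filter_upwards [eventually_ge_atTop 1] with k hk
  have hk0 : (0 : ℝ) < (k : ℝ) := by exact_mod_cast hk
  set x : ℝ := (k : ℝ) + (m + 1 : ℕ) with hxdef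
  have hx : (0 : ℝ) < x := by positivity
  have hsinpos : ∀ s ∈ Finset.Icc 1 m, 0 < Real.sin (π * (s : ℝ) / x) := by
    intro s hs
    simp only [Finset.mem_Icc] at hs
    have hs0 : (0:ℝ) < (s:ℝ) := by exact_mod_cast hs.1
    have hsm : (s:ℝ) ≤ (m:ℝ) := by exact_mod_cast hs.2
    refine Real.sin_pos_of_pos_of_lt_pi (by positivity) ?_
    rw [div_lt_iff₀ hx]
    have hxm : (m:ℝ) < x := by
      rw [hxdef]
      push_cast
      linarith
    nlinarith [Real.pi_pos]
  have hP : (0:ℝ) < ∏ s ∈ Finset.Icc 1 m,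
      Real.sin (π * (s : ℝ) / x) ^ (2 * (m + 1 - s)) :=
    Finset.prod_pos fun s hs => pow_pos (hsinpos s hs) _
  have hF : (0:ℝ) < ((∏ s ∈ Finset.Icc 1 m, Nat.factorial s : ℕ) : ℝ) := by
    exact_mod_cast Finset.prod_pos fun s _ => Nat.factorial_pos s
  -- the product of the numerators π s / x
  have hQ : ∏ s ∈ Finset.Icc 1 m, (π * (s : ℝ) / x) ^ (2 * (m + 1 - s)) =
      π ^ ((m + 1) * m) * ((∏ s ∈ Finset.Icc 1 m, Nat.factorial s : ℕ) : ℝ) ^ 2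
        / x ^ ((m + 1) * m) := by
    have e1 : ∀ s ∈ Finset.Icc 1 m, (π * (s : ℝ) / x) ^ (2 * (m + 1 - s)) =
        π ^ (2 * (m + 1 - s)) * ((s : ℝ) ^ (m + 1 - s)) ^ 2 / x ^ (2 * (m + 1 - s)) := by
      intro s hs
      rw [div_pow, mul_pow, ← pow_mul, mul_comm (m + 1 - s) 2]
    rw [Finset.prod_congr rfl e1, Finset.prod_div_distrib, Finset.prod_mul_distrib,
      Finset.prod_pow_eq_pow_sum, Finset.prod_pow_eq_pow_sum, aux_sum, Finset.prod_pow]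
    congr 2
    push_cast [← aux_prod m]
    ring
  simp only [hm1, ← hxdef]
  -- rewrite the goal
  have hexp : (m + 1) ^ 2 - 1 = m + (m + 1) * m := by
    have h : (m + 1) ^ 2 = m + (m + 1) * m + 1 := by ring
    omega
  have hNpos : (0:ℝ) < ((m + 1 : ℕ) : ℝ) := by positivity
  have hsplit : ∀ s ∈ Finset.Icc 1 m,
      ((π * (s : ℝ) / x) / Real.sin (π * (s : ℝ) / x)) ^ (2 * (m + 1 - s)) =
      (π * (s : ℝ) / x) ^ (2 * (m + 1 - s)) /
        Real.sin (π * (s : ℝ) / x) ^ (2 * (m + 1 - s)) := fun s _ => div_pow _ _ _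
  rw [Finset.prod_congr rfl hsplit, Finset.prod_div_distrib, hQ, div_pow, hexp, pow_add,
    mul_pow 2 π]
  have h2 : (0:ℝ) < 2 ^ ((m + 1) * m) := by positivity
  have hpi : (0:ℝ) < π ^ ((m + 1) * m) := by positivity
  field_simp
end

section
/- The classical Weyl denominator of type C_r (r ≥ 1) equals 2^{−r(r−1)} times the product of the factorials of the exponents: ( ∏_{1 ≤ i < j ≤ r} ((2r+2−i−j)/2)·((j−i)/2) ) · ( ∏_{i=1}^{r} (r + 1 − i) ) = (1/2^{r(r−1)}) · ∏_{s=1}^{r} (2s−1)!, as an identity of rational numbers. (The left-hand side is the product over the positive roots α of C_r of ⟨ρ, α⟩: the short roots (ε_i±ε_j)/√2 contribute (2r+2−i−j)/2 and (j−i)/2, and the long roots √2·ε_i contribute r+1−i.) -/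
open Finset

private lemma prodC1 (m : ℕ) : ∀ n : ℕ,
    ∏ i ∈ Finset.Icc 1 n, ((m : ℚ) + (i : ℚ)) = (Nat.factorial (m + n) : ℚ) / (Nat.factorial m : ℚ)
  | 0 => by
    simp [div_self (Nat.cast_ne_zero.mpr (Nat.factorial_ne_zero m) : (Nat.factorial m : ℚ) ≠ 0)]
  | n + 1 => by
    rw [Finset.prod_Icc_succ_top (Nat.le_add_left 1 n), prodC1 m n]
    have h1 : (Nat.factorial m : ℚ) ≠ 0 := Nat.cast_ne_zero.mpr (Nat.factorial_ne_zero m)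
    have h2 : m + (n + 1) = (m + n) + 1 := by ring
    rw [h2, Nat.factorial_succ]
    push_cast
    field_simp
    ring

private lemma prodFact : ∀ n : ℕ, ∏ i ∈ Finset.Icc 1 n, (i : ℚ) = (Nat.factorial n : ℚ)
  | 0 => by simp
  | n + 1 => by
    rw [Finset.prod_Icc_succ_top (Nat.le_add_left 1 n), prodFact n, Nat.factorial_succ]
    push_cast
    ring

private lemma prodC2 (r : ℕ) :
    ∏ i ∈ Finset.Icc 1 r, ((r : ℚ) + 1 - (i : ℚ)) = (Nat.factorial r : ℚ) := by
  rw [← prodFact r]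
  refine Finset.prod_nbij' (fun i => r + 1 - i) (fun i => r + 1 - i) ?_ ?_ ?_ ?_ ?_
  · intro a ha; simp only [Finset.mem_Icc] at ha ⊢; omega
  · intro a ha; simp only [Finset.mem_Icc] at ha ⊢; omega
  · intro a ha; simp only [Finset.mem_Icc] at ha; show r + 1 - (r + 1 - a) = a; omega
  · intro a ha; simp only [Finset.mem_Icc] at ha; show r + 1 - (r + 1 - a) = a; omega
  · intro a ha
    simp only [Finset.mem_Icc] at ha
    have h : ((r + 1 - a : ℕ) : ℚ) = (r : ℚ) + 1 - (a : ℚ) := by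
      push_cast [Nat.cast_sub (by omega : a ≤ r + 1)]; ring
    rw [h]

private lemma prodA (r : ℕ) (f : ℕ → ℕ → ℚ) :
    ∏ p ∈ (Finset.Icc 1 r ×ˢ Finset.Icc 1 r).filter (fun p => p.1 < p.2), f p.1 p.2
      = ∏ j ∈ Finset.Icc 1 r, ∏ i ∈ Finset.Ico 1 j, f i j := by
  rw [Finset.prod_filter, Finset.prod_product_right]
  refine Finset.prod_congr rfl fun j hj => ?_
  rw [← Finset.prod_filter]
  apply Finset.prod_congr _ fun _ _ => rfl
  simp only [Finset.mem_Icc] at hj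
  ext i
  simp only [Finset.mem_filter, Finset.mem_Icc, Finset.mem_Ico]
  omega

private lemma prodB : ∀ r : ℕ,
    (∏ j ∈ Finset.Icc 1 r, ∏ i ∈ Finset.Ico 1 j, (((i : ℚ) + (j : ℚ)) / 2) * (((j : ℚ) - (i : ℚ)) / 2)) *
      ∏ i ∈ Finset.Icc 1 r, (i : ℚ)
    = (1 / 2 ^ (r * (r - 1))) * ∏ s ∈ Finset.Icc 1 r, (Nat.factorial (2 * s - 1) : ℚ)
  | 0 => by simp
  | r + 1 => by
    rw [Finset.prod_Icc_succ_top (Nat.le_add_left 1 r) (fun j => ∏ i ∈ Finset.Ico 1 j, _),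
      Finset.prod_Icc_succ_top (Nat.le_add_left 1 r) (fun i => (i : ℚ)),
      Finset.prod_Icc_succ_top (Nat.le_add_left 1 r) (fun s => (Nat.factorial (2 * s - 1) : ℚ))]
    have key : (∏ i ∈ Finset.Ico 1 (r + 1),
        (((i : ℚ) + ((r + 1 : ℕ) : ℚ)) / 2) * ((((r + 1 : ℕ) : ℚ) - (i : ℚ)) / 2)) *
        ((r + 1 : ℕ) : ℚ) = (Nat.factorial (2 * (r + 1) - 1) : ℚ) / 2 ^ (2 * r) := by
      rw [Finset.Ico_add_one_right_eq_Icc]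
      have e1 : ∀ i ∈ Finset.Icc 1 r,
          (((i : ℚ) + ((r + 1 : ℕ) : ℚ)) / 2) * ((((r + 1 : ℕ) : ℚ) - (i : ℚ)) / 2)
            = (((r + 1 : ℕ) : ℚ) + (i : ℚ)) * (((r : ℚ) + 1 - (i : ℚ))) * (1 / 4) := by
        intro i _; push_cast; ring
      rw [Finset.prod_congr rfl e1, Finset.prod_mul_distrib, Finset.prod_mul_distrib,
        prodC1 (r + 1) r, prodC2 r, Finset.prod_const, Nat.card_Icc]
      have h1 : (Nat.factorial (r + 1) : ℚ) ≠ 0 := Nat.cast_ne_zero.mpr (Nat.factorial_ne_zero _)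
      have h2 : 2 * (r + 1) - 1 = (r + 1 + r) := by omega
      have h3 : r + 1 - 1 = r := by omega
      have h4 : Nat.factorial (r + 1) = (r + 1) * Nat.factorial r := Nat.factorial_succ r
      rw [h2, h3, h4]
      have h5 : ((1 : ℚ) / 4) ^ r = 1 / 2 ^ (2 * r) := by
        rw [div_pow, one_pow, pow_mul]
        norm_num
      rw [h5]
      have h6 : (2 : ℚ) ^ (2 * r) ≠ 0 := by positivity
      push_cast
      field_simp
    rw [mul_mul_mul_comm, key, prodB r]
    have hexp : (2 : ℚ) ^ ((r + 1) * (r + 1 - 1)) = (2 : ℚ) ^ (r * (r - 1)) * 2 ^ (2 * r) := by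
      rw [← pow_add]
      congr 1
      cases r with
      | zero => rfl
      | succ s => simp only [Nat.add_sub_cancel]; ring
    have h6 : (2 : ℚ) ^ (2 * r) ≠ 0 := by positivity
    have h7 : (2 : ℚ) ^ (r * (r - 1)) ≠ 0 := by positivity
    rw [hexp]
    field_simp

/-- The classical Weyl denominator of type `C_r` (`r ≥ 1`) equals `2^{−r(r−1)}`
times the product of the factorials of the exponents `1,3,…,2r−1`:
`(∏_{1≤i<j≤r} ((2r+2−i−j)/2)·((j−i)/2)) · (∏_{i=1}^r (r+1−i))
  = (1/2^{r(r−1)})·∏_{s=1}^r (2s−1)!`. -/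
theorem weylDenominator_Cr (r : ℕ) (hr : 1 ≤ r) :
    (∏ p ∈ (Finset.Icc 1 r ×ˢ Finset.Icc 1 r).filter (fun p => p.1 < p.2),
        (((2 * (r : ℚ) + 2 - (p.1 : ℚ) - (p.2 : ℚ)) / 2) * (((p.2 : ℚ) - (p.1 : ℚ)) / 2))) *
      (∏ i ∈ Finset.Icc 1 r, ((r : ℚ) + 1 - (i : ℚ)))
    = (1 / 2 ^ (r * (r - 1))) * ∏ s ∈ Finset.Icc 1 r, (Nat.factorial (2 * s - 1) : ℚ) := by
  have reidx : (∏ p ∈ (Finset.Icc 1 r ×ˢ Finset.Icc 1 r).filter (fun p => p.1 < p.2),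
        (((2 * (r : ℚ) + 2 - (p.1 : ℚ) - (p.2 : ℚ)) / 2) * (((p.2 : ℚ) - (p.1 : ℚ)) / 2)))
      = ∏ p ∈ (Finset.Icc 1 r ×ˢ Finset.Icc 1 r).filter (fun p => p.1 < p.2),
        (((p.1 : ℚ) + (p.2 : ℚ)) / 2) * (((p.2 : ℚ) - (p.1 : ℚ)) / 2) := by
    refine Finset.prod_nbij' (fun p => (r + 1 - p.2, r + 1 - p.1))
      (fun p => (r + 1 - p.2, r + 1 - p.1)) ?_ ?_ ?_ ?_ ?_ <;>
      intro p hp <;>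
      simp only [Finset.mem_filter, Finset.mem_product, Finset.mem_Icc] at hp ⊢
    · omega
    · omega
    · obtain ⟨⟨⟨h1, h2⟩, h3, h4⟩, h5⟩ := hp
      ext <;> simp <;> omega
    · obtain ⟨⟨⟨h1, h2⟩, h3, h4⟩, h5⟩ := hp
      ext <;> simp <;> omega
    · obtain ⟨⟨⟨h1, h2⟩, h3, h4⟩, h5⟩ := hp
      have c1 : ((r + 1 - p.2 : ℕ) : ℚ) = (r : ℚ) + 1 - (p.2 : ℚ) := by
        push_cast [Nat.cast_sub (by omega : p.2 ≤ r + 1)]; ring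
      have c2 : ((r + 1 - p.1 : ℕ) : ℚ) = (r : ℚ) + 1 - (p.1 : ℚ) := by
        push_cast [Nat.cast_sub (by omega : p.1 ≤ r + 1)]; ring
      simp only [c1, c2]
      ring
  rw [reidx, prodC2 r, ← prodFact r, prodA r (fun i j => ((i : ℚ) + (j : ℚ)) / 2 * (((j : ℚ) - (i : ℚ)) / 2)),
    prodB r]
end

section
/- Fusion product formula for the Weyl denominator of type A_r: let r ≥ 1, N = r+1, let G be the r×r matrix with G_{ab} = 1 if |a−b| = 1 and G_{ab} = 0 otherwise, and define matrices F_n by F_0 = 0, F_1 = I, F_{n+1} = F_n·G − F_{n−1}. Then ∏_{n=1}^{N} ∏_{b=1}^{r} ( ∑_{a=1}^{r} (F_n + F_{n−1})_{a,b} ) = ( ∏_{s=1}^{r} s! )², i.e. the double product equals the square of the classical Weyl denominator D = sf(r) of A_r. -/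
open Finset

/-- Adjacency matrix of the Dynkin diagram `A_r` (path graph on `r` vertices):
`G_{ab} = 1` if `|a − b| = 1` and `0` otherwise. -/
def pathG (r : ℕ) : Matrix (Fin r) (Fin r) ℤ :=
  Matrix.of fun a b => if (a : ℕ) + 1 = (b : ℕ) ∨ (b : ℕ) + 1 = (a : ℕ) then 1 else 0

/-- The `SU(2)` fusion matrices for `A_r`, defined by the Chebyshev recurrence
`F_0 = 0`, `F_1 = I`, `F_{n+1} = F_n·G − F_{n−1}`. -/
def fusF (r : ℕ) : ℕ → Matrix (Fin r) (Fin r) ℤ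
  | 0 => 0
  | 1 => 1
  | n + 2 => fusF r (n + 1) * pathG r - fusF r n

/-- Closed form for the column sums of `fusF`. -/
def msv (N n b : ℕ) : ℕ := min (min n b) (min (N - n) (N - b))

/-- The combined factor `msv N n b + msv N (n-1) b`. -/
def tv (N n b : ℕ) : ℕ := min (min (2 * n - 1) (2 * (N - n) + 1)) (min (2 * b) (2 * (N - b)))

lemma pickA (r : ℕ) (b : Fin r) (S : ℕ → ℤ) :
    ∑ c : Fin r, (if (c : ℕ) + 1 = (b : ℕ) then S (c : ℕ) else 0)
      = if (b : ℕ) = 0 then 0 else S ((b : ℕ) - 1) := by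
  by_cases hb0 : (b : ℕ) = 0
  · rw [if_pos hb0]
    apply Finset.sum_eq_zero
    intro c _
    rw [if_neg (by omega)]
  · rw [if_neg hb0]
    have hlt : (b : ℕ) - 1 < r := by have := b.isLt; omega
    rw [Finset.sum_eq_single (⟨(b : ℕ) - 1, hlt⟩ : Fin r)]
    · rw [if_pos (by simp only [Fin.val_mk]; omega)]
    · intro c _ hc
      rw [if_neg]
      intro h
      apply hc
      apply Fin.ext
      simp only [Fin.val_mk]
      omega
    · intro h; exact absurd (Finset.mem_univ _) h

lemma pickB (r : ℕ) (b : Fin r) (S : ℕ → ℤ) :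
    ∑ c : Fin r, (if (b : ℕ) + 1 = (c : ℕ) then S (c : ℕ) else 0)
      = if (b : ℕ) + 1 < r then S ((b : ℕ) + 1) else 0 := by
  by_cases h : (b : ℕ) + 1 < r
  · rw [if_pos h, Finset.sum_eq_single (⟨(b : ℕ) + 1, h⟩ : Fin r)]
    · rw [if_pos (by simp only [Fin.val_mk])]
    · intro c _ hc
      rw [if_neg]
      intro hcc
      apply hc
      apply Fin.ext
      simp only [Fin.val_mk]
      omega
    · intro h; exact absurd (Finset.mem_univ _) h
  · rw [if_neg h]
    apply Finset.sum_eq_zero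
    intro c _
    rw [if_neg]
    have := c.isLt
    omega

set_option maxHeartbeats 1600000 in
lemma colsum (r : ℕ) (hr : 1 ≤ r) :
    ∀ n, n ≤ r + 1 → ∀ b : Fin r,
      (∑ a : Fin r, fusF r n a b) = (msv (r + 1) n ((b : ℕ) + 1) : ℤ) := by
  intro n
  induction n using Nat.strong_induction_on with
  | _ n ih =>
    match n with
    | 0 =>
      intro _ b
      simp [fusF, msv]
    | 1 =>
      intro _ b
      have hb := b.isLt
      have h1 : (∑ a : Fin r, fusF r 1 a b) = 1 := by
        simp [fusF, Matrix.one_apply]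
      rw [h1]
      have : msv (r + 1) 1 ((b : ℕ) + 1) = 1 := by unfold msv; omega
      rw [this]; norm_num
    | n + 2 =>
      intro hn b
      have hb := b.isLt
      have h1 := ih (n + 1) (by omega) (by omega)
      have h0 := ih n (by omega) (by omega) b
      have hF : fusF r (n + 2) = fusF r (n + 1) * pathG r - fusF r n := by
        simp [fusF]
      rw [hF]
      have hmul : (∑ a : Fin r, (fusF r (n + 1) * pathG r) a b)
          = (msv (r + 1) (n + 1) (b : ℕ) : ℤ) + (msv (r + 1) (n + 1) ((b : ℕ) + 2) : ℤ) := by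
        simp only [Matrix.mul_apply]
        rw [Finset.sum_comm]
        have step : ∀ c ∈ (Finset.univ : Finset (Fin r)),
            (∑ a : Fin r, fusF r (n + 1) a c * pathG r c b)
            = (if (c : ℕ) + 1 = (b : ℕ) then ((msv (r + 1) (n + 1) ((c : ℕ) + 1) : ℤ)) else 0)
              + (if (b : ℕ) + 1 = (c : ℕ) then ((msv (r + 1) (n + 1) ((c : ℕ) + 1) : ℤ)) else 0) := by
          intro c _
          rw [← Finset.sum_mul, h1 c]
          unfold pathG
          simp only [Matrix.of_apply]
          by_cases hc1 : (c : ℕ) + 1 = (b : ℕ) <;> by_cases hc2 : (b : ℕ) + 1 = (c : ℕ)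
          · exact absurd hc2 (by omega)
          · simp [hc1, hc2]
          · simp [hc1, hc2]
          · simp [hc1, hc2]
        have hstep : (∑ c : Fin r, ∑ a : Fin r, fusF r (n + 1) a c * pathG r c b)
            = ∑ c : Fin r,
              ((if (c : ℕ) + 1 = (b : ℕ) then ((msv (r + 1) (n + 1) ((c : ℕ) + 1) : ℤ)) else 0)
              + (if (b : ℕ) + 1 = (c : ℕ) then ((msv (r + 1) (n + 1) ((c : ℕ) + 1) : ℤ)) else 0)) :=
          Finset.sum_congr rfl step
        rw [hstep, Finset.sum_add_distrib,
          pickA r b (fun k => (msv (r + 1) (n + 1) (k + 1) : ℤ)),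
          pickB r b (fun k => (msv (r + 1) (n + 1) (k + 1) : ℤ))]
        have e1 : (if (b : ℕ) = 0 then (0 : ℤ) else (msv (r + 1) (n + 1) ((b : ℕ) - 1 + 1) : ℤ))
            = (msv (r + 1) (n + 1) (b : ℕ) : ℤ) := by
          split
          · next h => rw [h]; unfold msv; simp
          · next h => rw [show (b : ℕ) - 1 + 1 = (b : ℕ) by omega]
        have e2 : (if (b : ℕ) + 1 < r then (msv (r + 1) (n + 1) ((b : ℕ) + 1 + 1) : ℤ) else 0)
            = (msv (r + 1) (n + 1) ((b : ℕ) + 2) : ℤ) := by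
          split
          · rfl
          · next h =>
            rw [show (b : ℕ) + 2 = r + 1 by omega]
            unfold msv
            simp
        rw [e1, e2]
      simp only [Matrix.sub_apply, Finset.sum_sub_distrib]
      rw [hmul, h0]
      have key : msv (r + 1) (n + 2) ((b : ℕ) + 1) + msv (r + 1) n ((b : ℕ) + 1)
          = msv (r + 1) (n + 1) (b : ℕ) + msv (r + 1) (n + 1) ((b : ℕ) + 2) := by
        unfold msv; omega
      have hcast := congrArg (fun x : ℕ => (x : ℤ)) key
      push_cast at hcast
      linarith

lemma keyProd : ∀ N, ∀ c : ℕ,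
    (∏ n ∈ Finset.range N, ∏ b ∈ Finset.range (N - 1), (tv N (n + 1) (b + 1) + 2 * c))
      = ∏ j ∈ Finset.range (N - 1), (j + 1 + 2 * c) ^ (2 * (N - 1 - j)) := by
  intro N
  induction N using Nat.strong_induction_on with
  | _ N ih =>
    match N with
    | 0 => intro c; simp
    | 1 => intro c; simp
    | 2 =>
      intro c
      have h1 : tv 2 1 1 = 1 := by unfold tv; omega
      have h2 : tv 2 2 1 = 1 := by unfold tv; omega
      simp [Finset.prod_range_succ, h1, h2]
      ring
    | K + 3 =>
      intro c
      have hIH := ih (K + 1) (by omega) (c + 1)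
      rw [show K + 1 - 1 = K by omega] at hIH
      rw [show K + 3 - 1 = K + 2 by omega]
      -- split off the first and last rows
      have h1 : (∏ n ∈ Finset.range (K + 3), ∏ b ∈ Finset.range (K + 2),
            (tv (K + 3) (n + 1) (b + 1) + 2 * c))
          = (∏ b ∈ Finset.range (K + 2), (tv (K + 3) (0 + 1) (b + 1) + 2 * c)) *
            ∏ n ∈ Finset.Ico 1 (K + 3), ∏ b ∈ Finset.range (K + 2),
              (tv (K + 3) (n + 1) (b + 1) + 2 * c) := by
        rw [Finset.range_eq_Ico]
        exact Finset.prod_eq_prod_Ico_succ_bot (by omega) _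
      have h2 : (∏ n ∈ Finset.Ico 1 (K + 3), ∏ b ∈ Finset.range (K + 2),
            (tv (K + 3) (n + 1) (b + 1) + 2 * c))
          = (∏ n ∈ Finset.Ico 1 (K + 2), ∏ b ∈ Finset.range (K + 2),
              (tv (K + 3) (n + 1) (b + 1) + 2 * c)) *
            ∏ b ∈ Finset.range (K + 2), (tv (K + 3) (K + 2 + 1) (b + 1) + 2 * c) :=
        Finset.prod_Ico_succ_top (by omega) _
      have hrow1 : (∏ b ∈ Finset.range (K + 2), (tv (K + 3) (0 + 1) (b + 1) + 2 * c))
          = (1 + 2 * c) ^ (K + 2) := by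
        have hterm : ∀ b ∈ Finset.range (K + 2), tv (K + 3) (0 + 1) (b + 1) + 2 * c = 1 + 2 * c := by
          intro b hb
          rw [Finset.mem_range] at hb
          unfold tv; omega
        rw [Finset.prod_congr rfl hterm, Finset.prod_const, Finset.card_range]
      have hrowN : (∏ b ∈ Finset.range (K + 2), (tv (K + 3) (K + 2 + 1) (b + 1) + 2 * c))
          = (1 + 2 * c) ^ (K + 2) := by
        have hterm : ∀ b ∈ Finset.range (K + 2),
            tv (K + 3) (K + 2 + 1) (b + 1) + 2 * c = 1 + 2 * c := by
          intro b hb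
          rw [Finset.mem_range] at hb
          unfold tv; omega
        rw [Finset.prod_congr rfl hterm, Finset.prod_const, Finset.card_range]
      -- middle rows
      have hmidrow : ∀ n ∈ Finset.Ico 1 (K + 2),
          (∏ b ∈ Finset.range (K + 2), (tv (K + 3) (n + 1) (b + 1) + 2 * c))
          = (2 + 2 * c) * (2 + 2 * c) *
            ∏ b ∈ Finset.range K, (tv (K + 1) n (b + 1) + 2 * (c + 1)) := by
        intro n hn
        rw [Finset.mem_Ico] at hn
        have i1 : (∏ b ∈ Finset.range (K + 2), (tv (K + 3) (n + 1) (b + 1) + 2 * c))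
            = (tv (K + 3) (n + 1) (0 + 1) + 2 * c) *
              ∏ b ∈ Finset.Ico 1 (K + 2), (tv (K + 3) (n + 1) (b + 1) + 2 * c) := by
          rw [Finset.range_eq_Ico]
          exact Finset.prod_eq_prod_Ico_succ_bot (by omega) _
        have i2 : (∏ b ∈ Finset.Ico 1 (K + 2), (tv (K + 3) (n + 1) (b + 1) + 2 * c))
            = (∏ b ∈ Finset.Ico 1 (K + 1), (tv (K + 3) (n + 1) (b + 1) + 2 * c)) *
              (tv (K + 3) (n + 1) (K + 1 + 1) + 2 * c) :=
          Finset.prod_Ico_succ_top (by omega) _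
        have i3 : (∏ b ∈ Finset.Ico 1 (K + 1), (tv (K + 3) (n + 1) (b + 1) + 2 * c))
            = ∏ b ∈ Finset.range (K + 1 - 1), (tv (K + 3) (n + 1) (1 + b + 1) + 2 * c) :=
          Finset.prod_Ico_eq_prod_range _ 1 (K + 1)
        have i4 : ∀ b ∈ Finset.range K,
            tv (K + 3) (n + 1) (1 + b + 1) + 2 * c = tv (K + 1) n (b + 1) + 2 * (c + 1) := by
          intro b hb
          rw [Finset.mem_range] at hb
          unfold tv; omega
        rw [show K + 1 - 1 = K by omega] at i3
        rw [i1, i2, i3, Finset.prod_congr rfl i4]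
        rw [show tv (K + 3) (n + 1) (0 + 1) = 2 by unfold tv; omega]
        rw [show tv (K + 3) (n + 1) (K + 1 + 1) = 2 by unfold tv; omega]
        ring
      have hmid : (∏ n ∈ Finset.Ico 1 (K + 2), ∏ b ∈ Finset.range (K + 2),
            (tv (K + 3) (n + 1) (b + 1) + 2 * c))
          = ∏ n ∈ Finset.Ico 1 (K + 2), ((2 + 2 * c) * (2 + 2 * c) *
              ∏ b ∈ Finset.range K, (tv (K + 1) n (b + 1) + 2 * (c + 1))) :=
        Finset.prod_congr rfl hmidrow
      have hmid2 : (∏ n ∈ Finset.Ico 1 (K + 2), ((2 + 2 * c) * (2 + 2 * c) *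
              ∏ b ∈ Finset.range K, (tv (K + 1) n (b + 1) + 2 * (c + 1))))
          = ((2 + 2 * c) ^ (K + 1) * (2 + 2 * c) ^ (K + 1)) *
            ∏ n ∈ Finset.Ico 1 (K + 2), ∏ b ∈ Finset.range K,
              (tv (K + 1) n (b + 1) + 2 * (c + 1)) := by
        rw [Finset.prod_mul_distrib, Finset.prod_const, Nat.card_Ico]
        rw [show K + 2 - 1 = K + 1 by omega, mul_pow]
      have hmid3 : (∏ n ∈ Finset.Ico 1 (K + 2), ∏ b ∈ Finset.range K,
            (tv (K + 1) n (b + 1) + 2 * (c + 1)))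
          = ∏ n ∈ Finset.range (K + 2 - 1), ∏ b ∈ Finset.range K,
              (tv (K + 1) (1 + n) (b + 1) + 2 * (c + 1)) :=
        Finset.prod_Ico_eq_prod_range _ 1 (K + 2)
      rw [show K + 2 - 1 = K + 1 by omega] at hmid3
      have hmid4 : ∀ n ∈ Finset.range (K + 1),
          (∏ b ∈ Finset.range K, (tv (K + 1) (1 + n) (b + 1) + 2 * (c + 1)))
          = ∏ b ∈ Finset.range K, (tv (K + 1) (n + 1) (b + 1) + 2 * (c + 1)) := by
        intro n _
        apply Finset.prod_congr rfl
        intro b _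
        rw [Nat.add_comm 1 n]
      have hmid5 : (∏ n ∈ Finset.range (K + 1), ∏ b ∈ Finset.range K,
            (tv (K + 1) (1 + n) (b + 1) + 2 * (c + 1)))
          = ∏ j ∈ Finset.range K, (j + 1 + 2 * (c + 1)) ^ (2 * (K - j)) := by
        rw [Finset.prod_congr rfl hmid4, hIH]
      rw [h1, h2, hrow1, hrowN, hmid, hmid2, hmid3, hmid5]
      -- now the right-hand side
      have hR : (∏ j ∈ Finset.range (K + 2), (j + 1 + 2 * c) ^ (2 * (K + 2 - j)))
          = ((∏ j ∈ Finset.range K, (j + 1 + 1 + 1 + 2 * c) ^ (2 * (K + 2 - (j + 1 + 1)))) *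
              (0 + 1 + 1 + 2 * c) ^ (2 * (K + 2 - (0 + 1)))) *
            (0 + 1 + 2 * c) ^ (2 * (K + 2 - 0)) := by
        rw [Finset.prod_range_succ' (fun j => (j + 1 + 2 * c) ^ (2 * (K + 2 - j))) (K + 1)]
        rw [Finset.prod_range_succ' (fun j => (j + 1 + 1 + 2 * c) ^ (2 * (K + 2 - (j + 1)))) K]
      rw [hR]
      have hconv : ∀ j ∈ Finset.range K,
          (j + 1 + 1 + 1 + 2 * c) ^ (2 * (K + 2 - (j + 1 + 1)))
          = (j + 1 + 2 * (c + 1)) ^ (2 * (K - j)) := by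
        intro j hj
        rw [Finset.mem_range] at hj
        rw [show j + 1 + 1 + 1 + 2 * c = j + 1 + 2 * (c + 1) by ring,
          show 2 * (K + 2 - (j + 1 + 1)) = 2 * (K - j) by omega]
      rw [Finset.prod_congr rfl hconv]
      rw [show 2 * (K + 2 - (0 + 1)) = 2 * (K + 1) by omega,
        show 2 * (K + 2 - 0) = 2 * (K + 2) by omega,
        show (0 : ℕ) + 1 + 1 + 2 * c = 2 + 2 * c by ring,
        show (0 : ℕ) + 1 + 2 * c = 1 + 2 * c by ring]
      ring

lemma sfact : ∀ r : ℕ, (∏ s ∈ Finset.Icc 1 r, Nat.factorial s)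
    = ∏ j ∈ Finset.range r, (j + 1) ^ (r - j) := by
  intro r
  induction r with
  | zero => simp
  | succ r ihr =>
    rw [Finset.prod_Icc_succ_top (by omega), ihr]
    have hsplit : ∀ j ∈ Finset.range (r + 1), (j + 1) ^ (r + 1 - j) = (j + 1) ^ (r - j) * (j + 1) := by
      intro j hj
      rw [Finset.mem_range] at hj
      rw [← pow_succ, show r + 1 - j = (r - j) + 1 by omega]
    rw [Finset.prod_congr rfl hsplit, Finset.prod_mul_distrib,
      Finset.prod_range_add_one_eq_factorial,
      Finset.prod_range_succ (fun j => (j + 1) ^ (r - j)) r]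
    simp

/-- Fusion product formula for the Weyl denominator of type `A_r`:
with `N = r+1`, `∏_{n=1}^N ∏_{b=1}^r (∑_{a=1}^r (F_n + F_{n−1})_{a,b})
 = (∏_{s=1}^r s!)²`. -/
theorem fusionProduct_weylDenominator_Ar (r : ℕ) (hr : 1 ≤ r) :
    ∏ n ∈ Finset.Icc 1 (r + 1), ∏ b : Fin r,
      (∑ a : Fin r, (fusF r n + fusF r (n - 1)) a b)
    = ((∏ s ∈ Finset.Icc 1 r, Nat.factorial s : ℕ) : ℤ) ^ 2 := by
  have hcol := colsum r hr
  have step1 : ∀ n ∈ Finset.Icc 1 (r + 1), ∀ b : Fin r,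
      (∑ a : Fin r, (fusF r n + fusF r (n - 1)) a b)
      = ((msv (r + 1) n ((b : ℕ) + 1) + msv (r + 1) (n - 1) ((b : ℕ) + 1) : ℕ) : ℤ) := by
    intro n hn b
    rw [Finset.mem_Icc] at hn
    have hadd : ∀ a : Fin r, (fusF r n + fusF r (n - 1)) a b
        = fusF r n a b + fusF r (n - 1) a b := fun a => rfl
    rw [Finset.sum_congr rfl (fun a _ => hadd a), Finset.sum_add_distrib,
      hcol n (by omega) b, hcol (n - 1) (by omega) b]
    push_cast
    ring
  have step2 : ∀ n ∈ Finset.Icc 1 (r + 1),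
      (∏ b : Fin r, ∑ a : Fin r, (fusF r n + fusF r (n - 1)) a b)
      = ((∏ b : Fin r, (msv (r + 1) n ((b : ℕ) + 1) + msv (r + 1) (n - 1) ((b : ℕ) + 1)) : ℕ) : ℤ) := by
    intro n hn
    rw [Nat.cast_prod]
    exact Finset.prod_congr rfl (fun b _ => step1 n hn b)
  rw [Finset.prod_congr rfl step2, ← Nat.cast_prod]
  -- now a ℕ identity
  have hnat : (∏ n ∈ Finset.Icc 1 (r + 1), ∏ b : Fin r,
        (msv (r + 1) n ((b : ℕ) + 1) + msv (r + 1) (n - 1) ((b : ℕ) + 1)))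
      = (∏ s ∈ Finset.Icc 1 r, Nat.factorial s) ^ 2 := by
    have nat1 : ∀ n ∈ Finset.Ico 1 (r + 2),
        (∏ b : Fin r, (msv (r + 1) n ((b : ℕ) + 1) + msv (r + 1) (n - 1) ((b : ℕ) + 1)))
        = ∏ b ∈ Finset.range r, (msv (r + 1) n (b + 1) + msv (r + 1) (n - 1) (b + 1)) :=
      fun n _ => Fin.prod_univ_eq_prod_range
        (fun k => msv (r + 1) n (k + 1) + msv (r + 1) (n - 1) (k + 1)) r
    rw [show Finset.Icc 1 (r + 1) = Finset.Ico 1 (r + 2) by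
        rw [← Finset.Ico_add_one_right_eq_Icc]; rfl]
    rw [Finset.prod_congr rfl nat1]
    have nat2 : (∏ n ∈ Finset.Ico 1 (r + 2), ∏ b ∈ Finset.range r,
          (msv (r + 1) n (b + 1) + msv (r + 1) (n - 1) (b + 1)))
        = ∏ n ∈ Finset.range (r + 2 - 1), ∏ b ∈ Finset.range r,
          (msv (r + 1) (1 + n) (b + 1) + msv (r + 1) (1 + n - 1) (b + 1)) :=
      Finset.prod_Ico_eq_prod_range _ 1 (r + 2)
    rw [show r + 2 - 1 = r + 1 by omega] at nat2
    rw [nat2]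
    have nat3 : ∀ n ∈ Finset.range (r + 1), ∀ b ∈ Finset.range r,
        msv (r + 1) (1 + n) (b + 1) + msv (r + 1) (1 + n - 1) (b + 1)
        = tv (r + 1) (n + 1) (b + 1) := by
      intro n hn b hb
      rw [Finset.mem_range] at hn hb
      unfold msv tv
      omega
    have nat4 : (∏ n ∈ Finset.range (r + 1), ∏ b ∈ Finset.range r,
          (msv (r + 1) (1 + n) (b + 1) + msv (r + 1) (1 + n - 1) (b + 1)))
        = ∏ n ∈ Finset.range (r + 1), ∏ b ∈ Finset.range r, tv (r + 1) (n + 1) (b + 1) :=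
      Finset.prod_congr rfl (fun n hn => Finset.prod_congr rfl (fun b hb => nat3 n hn b hb))
    rw [nat4]
    have kp := keyProd (r + 1) 0
    rw [show r + 1 - 1 = r by omega] at kp
    simp only [Nat.mul_zero, Nat.add_zero] at kp
    rw [kp, sfact r, ← Finset.prod_pow]
    apply Finset.prod_congr rfl
    intro j _
    rw [← pow_mul, Nat.mul_comm (r - j) 2]
  rw [hnat]
  push_cast
  ring
end

section
/- Explicit column sums of SU(2) fusion matrices for A_r: let r ≥ 1, N = r+1, G the r×r adjacency matrix of the path graph (G_{ab}=1 iff |a−b|=1), F_0 = 0, F_1 = I, F_{n+1} = F_n·G − F_{n−1}, and λ_{n,b} = ∑_{a=1}^{r} (F_n + F_{n−1})_{a,b}. Then for every n with 1 ≤ n and 2n ≤ N, and every b with 1 ≤ b ≤ N−1: λ_{n,b} = 2b if b ≤ n−1; λ_{n,b} = 2n−1 if n ≤ b ≤ N−n; and λ_{n,b} = 2(N−b) if b ≥ N−n+1. -/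
open Finset

/-- Padded column sums of `fusF`, with `1`-based column index `B`. -/
def Scol (r n B : ℕ) : ℤ :=
  if h : 1 ≤ B ∧ B ≤ r then ∑ a : Fin r, fusF r n a ⟨B - 1, by omega⟩ else 0

lemma Scol_eq (r n B : ℕ) (h1 : 1 ≤ B) (h2 : B ≤ r) :
    Scol r n B = ∑ a : Fin r, fusF r n a ⟨B - 1, by omega⟩ :=
  dif_pos ⟨h1, h2⟩

lemma sum_mul_pathG (r : ℕ) (g : Fin r → ℤ) (b : Fin r) :
    ∑ c : Fin r, g c * pathG r c b =
      (if h : 1 ≤ (b : ℕ) then g ⟨(b : ℕ) - 1, by omega⟩ else 0) +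
      (if h : (b : ℕ) + 1 < r then g ⟨(b : ℕ) + 1, h⟩ else 0) := by
  have key : ∀ c : Fin r, g c * pathG r c b =
      (if (c : ℕ) + 1 = (b : ℕ) then g c else 0) +
      (if (b : ℕ) + 1 = (c : ℕ) then g c else 0) := by
    intro c
    unfold pathG
    simp only [Matrix.of_apply, mul_ite, mul_one, mul_zero]
    by_cases h1 : (c : ℕ) + 1 = (b : ℕ) <;> by_cases h2 : (b : ℕ) + 1 = (c : ℕ) <;>
      simp [h1, h2] <;> omega
  rw [Finset.sum_congr rfl fun c _ => key c, Finset.sum_add_distrib]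
  congr 1
  · by_cases hb : 1 ≤ (b : ℕ)
    · rw [dif_pos hb]
      have hcond : ∀ c : Fin r, ((c : ℕ) + 1 = (b : ℕ)) = (c = ⟨(b : ℕ) - 1, by omega⟩) := by
        intro c
        apply propext
        rw [Fin.ext_iff]
        constructor <;> intro h <;> simp_all <;> omega
      simp only [hcond]
      simp
    · rw [dif_neg hb]
      apply Finset.sum_eq_zero
      intro c _
      rw [if_neg]
      omega
  · by_cases hb : (b : ℕ) + 1 < r
    · rw [dif_pos hb]
      have hcond : ∀ c : Fin r, ((b : ℕ) + 1 = (c : ℕ)) = (c = ⟨(b : ℕ) + 1, hb⟩) := by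
        intro c
        apply propext
        rw [Fin.ext_iff]
        constructor <;> intro h <;> simp_all
      simp only [hcond]
      simp
    · rw [dif_neg hb]
      apply Finset.sum_eq_zero
      intro c _
      rw [if_neg]
      have := c.isLt
      omega

lemma Scol_rec (r n B : ℕ) (h1 : 1 ≤ B) (h2 : B ≤ r) :
    Scol r (n + 2) B = Scol r (n + 1) (B - 1) + Scol r (n + 1) (B + 1) - Scol r n B := by
  rw [Scol_eq r (n + 2) B h1 h2, show fusF r (n + 2) = fusF r (n + 1) * pathG r - fusF r n
      from rfl]
  simp only [Matrix.sub_apply, Finset.sum_sub_distrib, Matrix.mul_apply]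
  rw [Finset.sum_comm]
  rw [Finset.sum_congr rfl fun c _ => (Finset.sum_mul ..).symm]
  rw [sum_mul_pathG r (fun c => ∑ a : Fin r, fusF r (n + 1) a c) ⟨B - 1, by omega⟩]
  rw [Scol_eq r n B h1 h2]
  congr 2
  · by_cases hB : 2 ≤ B
    · rw [dif_pos (by simp; omega), Scol_eq r (n + 1) (B - 1) (by omega) (by omega)]
    · rw [dif_neg (by simp; omega)]
      have : ¬ (1 ≤ B - 1 ∧ B - 1 ≤ r) := by omega
      rw [Scol, dif_neg this]
  · by_cases hB : B < r
    · rw [dif_pos (by simp; omega), Scol_eq r (n + 1) (B + 1) (by omega) (by omega)]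
      congr 1
      ext a
      congr 1
      simp [Fin.ext_iff]
      omega
    · rw [dif_neg (by simp; omega)]
      have : ¬ (1 ≤ B + 1 ∧ B + 1 ≤ r) := by omega
      rw [Scol, dif_neg this]

lemma Scol_formula (r : ℕ) : ∀ n, 2 * n ≤ r + 1 → ∀ B, 1 ≤ B → B ≤ r →
    Scol r n B = min (B : ℤ) (min (n : ℤ) ((r : ℤ) + 1 - B)) := by
  intro n
  induction n using Nat.strong_induction_on with
  | _ n ih =>
    match n with
    | 0 =>
      intro _ B hB1 hBr
      rw [Scol_eq r 0 B hB1 hBr]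
      simp only [fusF, Matrix.zero_apply, Finset.sum_const_zero]
      omega
    | 1 =>
      intro _ B hB1 hBr
      rw [Scol_eq r 1 B hB1 hBr]
      have : ∑ a : Fin r, fusF r 1 a ⟨B - 1, by omega⟩ = 1 := by
        simp [fusF, Matrix.one_apply]
      rw [this]
      omega
    | (m + 2) =>
      intro h2n B hB1 hBr
      rw [Scol_rec r m B hB1 hBr]
      have IH1 := ih (m + 1) (by omega) (by omega)
      have IH0 := ih m (by omega) (by omega) B hB1 hBr
      rw [IH0]
      by_cases hB2 : 2 ≤ B
      · rw [IH1 (B - 1) (by omega) (by omega)]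
        by_cases hBr' : B < r
        · rw [IH1 (B + 1) (by omega) (by omega)]
          omega
        · have hBeq : B = r := by omega
          have : Scol r (m + 1) (B + 1) = 0 := by
            rw [Scol, dif_neg (by omega)]
          rw [this]
          omega
      · have hBeq : B = 1 := by omega
        have h0 : Scol r (m + 1) (B - 1) = 0 := by
          rw [Scol, dif_neg (by omega)]
        rw [h0]
        by_cases hBr' : B < r
        · rw [IH1 (B + 1) (by omega) (by omega)]
          omega
        · have : Scol r (m + 1) (B + 1) = 0 := by
            rw [Scol, dif_neg (by omega)]
          rw [this]
          omega

/-- Explicit column sums of the `SU(2)` fusion matrices for `A_r`: with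
`N = r+1`, `λ_{n,b} = ∑_a (F_n + F_{n−1})_{a,b}`, for `1 ≤ n`, `2n ≤ N` and
`1 ≤ b ≤ N−1` (here `b` is the `1`-based index `(b:ℕ)+1` of a vertex
`b : Fin r`): `λ_{n,b} = 2b` if `b ≤ n−1`; `λ_{n,b} = 2n−1` if
`n ≤ b ≤ N−n`; and `λ_{n,b} = 2(N−b)` if `b ≥ N−n+1`. -/
theorem fusion_columnSums_Ar (r : ℕ) (hr : 1 ≤ r) (n : ℕ) (hn : 1 ≤ n)
    (hn2 : 2 * n ≤ r + 1) (b : Fin r) :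
    (((b : ℕ) + 1 ≤ n - 1 →
        (∑ a : Fin r, (fusF r n + fusF r (n - 1)) a b) = 2 * ((b : ℕ) + 1)) ∧
     (n ≤ (b : ℕ) + 1 ∧ (b : ℕ) + 1 ≤ (r + 1) - n →
        (∑ a : Fin r, (fusF r n + fusF r (n - 1)) a b) = 2 * (n : ℤ) - 1) ∧
     ((r + 1) - n + 1 ≤ (b : ℕ) + 1 →
        (∑ a : Fin r, (fusF r n + fusF r (n - 1)) a b)
          = 2 * (((r + 1) - ((b : ℕ) + 1) : ℕ) : ℤ))) := by
  have hblt := b.isLt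
  have hS : (∑ a : Fin r, (fusF r n + fusF r (n - 1)) a b)
      = Scol r n ((b : ℕ) + 1) + Scol r (n - 1) ((b : ℕ) + 1) := by
    rw [Scol_eq r n ((b : ℕ) + 1) (by omega) (by omega),
        Scol_eq r (n - 1) ((b : ℕ) + 1) (by omega) (by omega)]
    have hb : (⟨(b : ℕ) + 1 - 1, by omega⟩ : Fin r) = b := by
      simp [Fin.ext_iff]
    rw [hb]
    simp [Matrix.add_apply, Finset.sum_add_distrib]
  rw [hS, Scol_formula r n hn2 ((b : ℕ) + 1) (by omega) (by omega),
      Scol_formula r (n - 1) (by omega) ((b : ℕ) + 1) (by omega) (by omega)]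
  refine ⟨fun h => ?_, fun h => ?_, fun h => ?_⟩ <;> omega
end

section
/- Symmetries of the column sums of SU(2) fusion matrices for A_r: with r ≥ 1, N = r+1, G the r×r adjacency matrix of the path graph, F_0 = 0, F_1 = I, F_{n+1} = F_n·G − F_{n−1}, and λ_{n,b} = ∑_{a=1}^{r} (F_n + F_{n−1})_{a,b}, one has λ_{N−n+1, b} = λ_{n,b} and λ_{n, N−b} = λ_{n,b} for all 1 ≤ n ≤ N and 1 ≤ b ≤ N−1. -/
open Finset

/-- Explicit formula for the entries of the fusion matrices, in `1`-based
coordinates `A, B` (image-charge/reflection solution of the Chebyshev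
recurrence on the path). -/
def gA (r n : ℕ) (A B : ℤ) : ℤ :=
  if A - B < (n:ℤ) ∧ B - A < (n:ℤ) ∧ (n:ℤ) < A + B ∧ A + B + (n:ℤ) < 2*((r:ℤ)+1)
      ∧ (A + B + (n:ℤ)) % 2 = 1 then 1 else 0

lemma gA_refl (r n : ℕ) (A B : ℤ) :
    gA r n ((r:ℤ)+1-A) ((r:ℤ)+1-B) = gA r n A B := by
  unfold gA; split_ifs <;> first | rfl | omega

lemma gA_dual (r n : ℕ) (hn : n ≤ r+1) (A B : ℤ) :
    gA r (r+1-n) A B = gA r n ((r:ℤ)+1-A) B := by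
  unfold gA
  have h : ((r+1-n : ℕ) : ℤ) = (r:ℤ)+1-(n:ℤ) := by omega
  rw [h]; split_ifs <;> first | rfl | omega

lemma gA_B0 (r n : ℕ) (A : ℤ) : gA r n A 0 = 0 := by
  unfold gA; rw [if_neg]; omega

lemma gA_Btop (r n : ℕ) (A : ℤ) : gA r n A ((r:ℤ)+1) = 0 := by
  unfold gA; rw [if_neg]; omega

lemma gA_rec (r n : ℕ) (hn : n + 2 ≤ r + 1) (A B : ℤ)
    (hA2 : A ≤ (r:ℤ)) (hB1 : 1 ≤ B) (hB2 : B ≤ (r:ℤ)) :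
    gA r (n+2) A B + gA r n A B = gA r (n+1) A (B-1) + gA r (n+1) A (B+1) := by
  unfold gA; split_ifs <;> omega

lemma sum_if_coe (r : ℕ) (Z : Fin r → ℤ) (k : ℕ) (hk : k < r) :
    ∑ c : Fin r, (if (c:ℕ) = k then Z c else 0) = Z ⟨k, hk⟩ := by
  rw [Fintype.sum_eq_single (⟨k, hk⟩ : Fin r)
      (fun d hd => if_neg (fun hc => hd (Fin.ext hc)))]
  exact if_pos rfl

lemma sum_pathG (r : ℕ) (Y : ℤ → ℤ) (h0 : Y 0 = 0) (htop : Y ((r:ℤ)+1) = 0) (b : Fin r) :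
    ∑ c : Fin r, Y (((c:ℕ):ℤ)+1) * pathG r c b = Y ((b:ℕ):ℤ) + Y (((b:ℕ):ℤ)+2) := by
  have hb := b.isLt
  have key : ∀ c : Fin r, Y (((c:ℕ):ℤ)+1) * pathG r c b =
      (if (c:ℕ)+1 = (b:ℕ) then Y (((c:ℕ):ℤ)+1) else 0)
      + (if (b:ℕ)+1 = (c:ℕ) then Y (((c:ℕ):ℤ)+1) else 0) := by
    intro c
    simp only [pathG, Matrix.of_apply]
    split_ifs <;> first | omega | ring
  rw [Finset.sum_congr rfl fun c _ => key c, Finset.sum_add_distrib]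
  congr 1
  · rcases Nat.eq_zero_or_pos (b:ℕ) with hb0 | hb0
    · rw [Finset.sum_eq_zero fun c _ => if_neg (by omega),
        show ((b:ℕ):ℤ) = 0 from by exact_mod_cast hb0, h0]
    · calc (∑ x : Fin r, if (x:ℕ)+1 = (b:ℕ) then Y (((x:ℕ):ℤ)+1) else 0)
          = ∑ x : Fin r, if (x:ℕ) = (b:ℕ)-1 then Y (((x:ℕ):ℤ)+1) else 0 :=
            Finset.sum_congr rfl fun c _ => if_congr (by omega) rfl rfl
        _ = Y (((((b:ℕ)-1 : ℕ)):ℤ)+1) := sum_if_coe r _ _ (by omega)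
        _ = Y ((b:ℕ):ℤ) := by congr 1; omega
  · rcases Nat.lt_or_ge ((b:ℕ)+1) r with hb1 | hb1
    · calc (∑ x : Fin r, if (b:ℕ)+1 = (x:ℕ) then Y (((x:ℕ):ℤ)+1) else 0)
          = ∑ x : Fin r, if (x:ℕ) = (b:ℕ)+1 then Y (((x:ℕ):ℤ)+1) else 0 :=
            Finset.sum_congr rfl fun c _ => if_congr (by omega) rfl rfl
        _ = Y (((((b:ℕ)+1 : ℕ)):ℤ)+1) := sum_if_coe r _ _ hb1
        _ = Y (((b:ℕ):ℤ)+2) := by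
            rw [show ((((b:ℕ)+1 : ℕ)):ℤ)+1 = ((b:ℕ):ℤ)+2 from by push_cast; ring]
    · rw [Finset.sum_eq_zero fun c _ => if_neg (by have := c.isLt; omega),
        show (((b:ℕ):ℤ)+2) = (r:ℤ)+1 from by omega, htop]

/-- The fusion matrices are given by the explicit formula `gA`, for `n ≤ r+1`. -/
lemma fus_eq (r : ℕ) : ∀ n, n ≤ r + 1 → ∀ a b : Fin r,
    fusF r n a b = gA r n (((a:ℕ):ℤ)+1) (((b:ℕ):ℤ)+1)
  | 0, _, a, b => by
    simp only [fusF, Matrix.zero_apply]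
    unfold gA; rw [if_neg]; omega
  | 1, _, a, b => by
    have ha := a.isLt
    simp only [fusF, Matrix.one_apply]
    unfold gA
    by_cases hab : a = b
    · subst hab
      rw [if_pos rfl, if_pos (by omega)]
    · have hab' : (a:ℕ) ≠ (b:ℕ) := fun h => hab (Fin.ext h)
      rw [if_neg hab, if_neg (by omega)]
  | n+2, h, a, b => by
    have ha := a.isLt; have hb := b.isLt
    have IH1 := fus_eq r (n+1) (by omega)
    have IH0 := fus_eq r n (by omega) a b
    simp only [fusF, Matrix.sub_apply, Matrix.mul_apply]
    rw [IH0]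
    rw [Finset.sum_congr rfl fun c _ => by rw [IH1 a c]]
    rw [sum_pathG r (fun B => gA r (n+1) (((a:ℕ):ℤ)+1) B) (gA_B0 r (n+1) _)
        (gA_Btop r (n+1) _) b]
    have hrec := gA_rec r n h (((a:ℕ):ℤ)+1) (((b:ℕ):ℤ)+1)
      (by omega) (by omega) (by omega)
    have e1 : (((b:ℕ):ℤ)+1) - 1 = ((b:ℕ):ℤ) := by ring
    have e2 : (((b:ℕ):ℤ)+1) + 1 = ((b:ℕ):ℤ)+2 := by ring
    rw [e1, e2] at hrec
    linarith

/-- Symmetries of the column sums `λ_{n,b} = ∑_a (F_n + F_{n−1})_{a,b}` of the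
`SU(2)` fusion matrices for `A_r`: with `N = r+1`, `λ_{N−n+1,b} = λ_{n,b}` and
`λ_{n,N−b} = λ_{n,b}` for `1 ≤ n ≤ N` and `1 ≤ b ≤ N−1` (a vertex `b : Fin r`
has `1`-based index `(b:ℕ)+1`, and the vertex `N−b` has `0`-based index
`r−1−(b:ℕ)`). -/
theorem fusion_columnSums_symm_Ar (r : ℕ) (hr : 1 ≤ r) (n : ℕ) (hn : 1 ≤ n)
    (hn2 : n ≤ r + 1) (b : Fin r) :
    (∑ a : Fin r, (fusF r ((r + 1) - n + 1) + fusF r ((r + 1) - n + 1 - 1)) a b)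
      = (∑ a : Fin r, (fusF r n + fusF r (n - 1)) a b) ∧
    (∑ a : Fin r, (fusF r n + fusF r (n - 1)) a
        ⟨r - 1 - (b : ℕ), by have := b.isLt; omega⟩)
      = (∑ a : Fin r, (fusF r n + fusF r (n - 1)) a b) := by
  have hb := b.isLt
  -- column sums of fusion matrices via the explicit formula
  have colsum : ∀ m, m ≤ r+1 → ∀ B : Fin r,
      (∑ a : Fin r, fusF r m a B) = ∑ a : Fin r, gA r m (((a:ℕ):ℤ)+1) (((B:ℕ):ℤ)+1) :=
    fun m hm B => Finset.sum_congr rfl fun a _ => fus_eq r m hm a B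
  -- reindexing a ↦ r−1−a
  have reidx : ∀ (m : ℕ) (B : ℤ),
      (∑ a : Fin r, gA r m (((a:ℕ):ℤ)+1) B) = ∑ a : Fin r, gA r m ((r:ℤ)-((a:ℕ):ℤ)) B := by
    intro m B
    refine Fintype.sum_equiv Fin.revPerm _ _ (fun x => ?_)
    have hx := x.isLt
    congr 1
    have : ((Fin.revPerm x : Fin r) : ℕ) = r - ((x:ℕ)+1) := Fin.val_rev x
    rw [this]
    omega
  -- duality n ↦ N−n of the column sums
  have dualS : ∀ m, m ≤ r+1 → ∀ B : ℤ,
      (∑ a : Fin r, gA r ((r+1)-m) (((a:ℕ):ℤ)+1) B)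
        = ∑ a : Fin r, gA r m (((a:ℕ):ℤ)+1) B := by
    intro m hm B
    calc (∑ a : Fin r, gA r ((r+1)-m) (((a:ℕ):ℤ)+1) B)
        = ∑ a : Fin r, gA r m ((r:ℤ)-((a:ℕ):ℤ)) B := by
          refine Finset.sum_congr rfl fun a _ => ?_
          rw [gA_dual r m hm, show (r:ℤ)+1-(((a:ℕ):ℤ)+1) = (r:ℤ)-((a:ℕ):ℤ) from by ring]
      _ = _ := (reidx m B).symm
  -- sums of sums
  have hsum : ∀ (m₁ m₂ : ℕ) (B : Fin r),
      (∑ a : Fin r, (fusF r m₁ + fusF r m₂) a B)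
        = (∑ a : Fin r, fusF r m₁ a B) + (∑ a : Fin r, fusF r m₂ a B) := by
    intro m₁ m₂ B
    rw [← Finset.sum_add_distrib]
    exact Finset.sum_congr rfl fun a _ => rfl
  constructor
  · -- duality in n
    rw [show (r+1) - n + 1 - 1 = (r+1) - n from by omega,
        show (r+1) - n + 1 = (r+1) - (n-1) from by omega]
    rw [hsum, hsum, colsum ((r+1)-(n-1)) (by omega) b, colsum ((r+1)-n) (by omega) b,
        colsum n hn2 b, colsum (n-1) (by omega) b,
        dualS (n-1) (by omega), dualS n hn2]
    ring
  · -- reflection in b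
    have hval : ((( ⟨r - 1 - (b : ℕ), by omega⟩ : Fin r) : ℕ) : ℤ) + 1
        = (r:ℤ) - ((b:ℕ):ℤ) := by
      have : ((⟨r - 1 - (b : ℕ), by omega⟩ : Fin r) : ℕ) = r - 1 - (b:ℕ) := rfl
      rw [this]; omega
    have refl_col : ∀ m, m ≤ r+1 →
        (∑ a : Fin r, fusF r m a ⟨r - 1 - (b : ℕ), by omega⟩)
          = ∑ a : Fin r, fusF r m a b := by
      intro m hm
      rw [colsum m hm, colsum m hm b]
      calc (∑ a : Fin r, gA r m (((a:ℕ):ℤ)+1)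
              ((((⟨r - 1 - (b : ℕ), by omega⟩ : Fin r) : ℕ) : ℤ) + 1))
          = ∑ a : Fin r, gA r m ((r:ℤ)-((a:ℕ):ℤ)) (((b:ℕ):ℤ)+1) := by
            refine Finset.sum_congr rfl fun a _ => ?_
            rw [hval]
            have h := gA_refl r m ((r:ℤ)-((a:ℕ):ℤ)) (((b:ℕ):ℤ)+1)
            rw [show (r:ℤ)+1-((r:ℤ)-((a:ℕ):ℤ)) = ((a:ℕ):ℤ)+1 from by ring,
                show (r:ℤ)+1-(((b:ℕ):ℤ)+1) = (r:ℤ)-((b:ℕ):ℤ) from by ring] at h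
            exact h
        _ = _ := (reidx m (((b:ℕ):ℤ)+1)).symm
    rw [hsum, hsum, refl_col n hn2, refl_col (n-1) (by omega)]
end

section
/- Row products of the column sums of SU(2) fusion matrices for A_r: with r ≥ 1, N = r+1, G the r×r adjacency matrix of the path graph, F_0 = 0, F_1 = I, F_{n+1} = F_n·G − F_{n−1}, and λ_{n,b} = ∑_{a=1}^{r} (F_n + F_{n−1})_{a,b}, one has for every n with 1 ≤ n and 2n ≤ N: ∏_{b=1}^{N−1} λ_{n,b} = 4^{n−1} · ((n−1)!)² · (2n−1)^{N−2n+1}. -/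
open Finset

/-- Column sums of `fusF`, as a function of a natural index (0 outside range). -/
def Tc (r n k : ℕ) : ℤ := if h : k < r then ∑ a, fusF r n a ⟨k, h⟩ else 0

lemma Tc_zero (r k : ℕ) : Tc r 0 k = 0 := by
  unfold Tc; split <;> simp [fusF]

lemma Tc_one (r k : ℕ) : Tc r 1 k = if k < r then 1 else 0 := by
  by_cases h : k < r
  · rw [Tc, dif_pos h, if_pos h]
    simp [fusF, Matrix.one_apply]
  · rw [Tc, dif_neg h, if_neg h]

lemma sum_ite_coe (r j : ℕ) (f : Fin r → ℤ) :
    ∑ c : Fin r, (if (c : ℕ) = j then f c else 0) = if h : j < r then f ⟨j, h⟩ else 0 := by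
  by_cases h : j < r
  · rw [dif_pos h, Finset.sum_eq_single ⟨j, h⟩]
    · simp
    · intro b _ hb
      rw [if_neg]
      intro hbj
      exact hb (Fin.ext hbj)
    · simp
  · rw [dif_neg h]
    apply Finset.sum_eq_zero
    intro c _
    rw [if_neg]
    have := c.isLt
    omega

lemma pathG_apply (r k : ℕ) (hk : k < r) (c : Fin r) :
    pathG r c ⟨k, hk⟩ = (if (c : ℕ) = k + 1 then 1 else 0) + (if (c : ℕ) + 1 = k then 1 else 0) := by
  simp only [pathG, Matrix.of_apply]
  split_ifs <;> omega

lemma Tc_ge (r n k : ℕ) (h : ¬ k < r) : Tc r n k = 0 := by rw [Tc, dif_neg h]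

lemma Tc_rec (r n k : ℕ) (hk : k < r) :
    Tc r (n + 2) k =
      Tc r (n + 1) (k + 1) + (if k = 0 then 0 else Tc r (n + 1) (k - 1)) - Tc r n k := by
  have hT : ∀ m (c : Fin r), (∑ a, fusF r m a c) = Tc r m c := by
    intro m c
    rw [Tc, dif_pos c.isLt]
  conv_lhs => rw [Tc, dif_pos hk]
  show (∑ a, (fusF r (n+1) * pathG r - fusF r n) a ⟨k, hk⟩) = _
  simp only [Matrix.sub_apply, Finset.sum_sub_distrib, Matrix.mul_apply]
  rw [Finset.sum_comm]
  have h1 : ∀ c : Fin r, (∑ a, fusF r (n+1) a c * pathG r c ⟨k, hk⟩)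
      = (if (c:ℕ) = k + 1 then Tc r (n+1) c else 0) + (if (c:ℕ) + 1 = k then Tc r (n+1) c else 0) := by
    intro c
    rw [← Finset.sum_mul, hT, pathG_apply r k hk c]
    split_ifs <;> ring
  rw [Finset.sum_congr rfl (fun c _ => h1 c), Finset.sum_add_distrib, sum_ite_coe]
  have h2 : (∑ c : Fin r, if (c:ℕ) + 1 = k then Tc r (n+1) (c:ℕ) else 0)
      = (if k = 0 then 0 else Tc r (n+1) (k-1)) := by
    rcases Nat.eq_zero_or_pos k with h | h
    · subst h
      simp
    · rw [if_neg (by omega)]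
      have : ∀ c : Fin r, (if (c:ℕ) + 1 = k then Tc r (n+1) (c:ℕ) else 0)
          = (if (c:ℕ) = k - 1 then Tc r (n+1) (c:ℕ) else 0) := by
        intro c; split_ifs <;> first | rfl | omega
      rw [Finset.sum_congr rfl (fun c _ => this c), sum_ite_coe, dif_pos (by omega)]
  rw [h2]
  have hTk : (∑ c : Fin r, fusF r n c ⟨k, hk⟩) = Tc r n k := by rw [Tc, dif_pos hk]
  rw [hTk]
  have h3 : (if h : k + 1 < r then Tc r (n+1) ((⟨k+1, h⟩ : Fin r) : ℕ) else 0)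
      = Tc r (n+1) (k+1) := by
    by_cases h : k + 1 < r
    · rw [dif_pos h]
    · rw [dif_neg h, Tc_ge r (n+1) (k+1) h]
  rw [h3]

/-- The main formula for `λ_{n,b}`. -/
lemma lam_eq (r : ℕ) : ∀ n, 1 ≤ n → 2 * n ≤ r + 1 → ∀ k, k < r →
    Tc r n k + Tc r (n - 1) k
      = min (2 * ((k : ℤ) + 1)) (min (2 * ((r : ℤ) - (k : ℕ))) (2 * (n : ℤ) - 1)) := by
  intro n
  induction n using Nat.strong_induction_on with
  | _ n IH =>
    match n with
    | 0 => intro h1; omega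
    | 1 =>
      intro _ h2 k hk
      rw [Tc_one, Tc_zero, if_pos hk]
      omega
    | 2 =>
      intro _ h2 k hk
      have hrec : Tc r 2 k = Tc r 1 (k+1) + (if k = 0 then 0 else Tc r 1 (k-1)) - Tc r 0 k :=
        Tc_rec r 0 k hk
      rw [Tc_zero] at hrec
      show Tc r 2 k + Tc r 1 k = _
      rw [hrec, Tc_one, Tc_one, Tc_one, if_pos hk]
      split_ifs <;> omega
    | (m + 3) =>
      intro _ h2 k hk
      have ih2 : ∀ j, j < r → Tc r (m+2) j + Tc r (m+1) j
          = min (2 * ((j : ℤ) + 1)) (min (2 * ((r : ℤ) - (j : ℕ))) (2 * ((m+2 : ℕ) : ℤ) - 1)) :=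
        fun j hj => IH (m+2) (by omega) (by omega) (by omega) j hj
      have ih1 : ∀ j, j < r → Tc r (m+1) j + Tc r m j
          = min (2 * ((j : ℤ) + 1)) (min (2 * ((r : ℤ) - (j : ℕ))) (2 * ((m+1 : ℕ) : ℤ) - 1)) :=
        fun j hj => IH (m+1) (by omega) (by omega) (by omega) j hj
      have hrec1 : Tc r (m+3) k
          = Tc r (m+2) (k+1) + (if k = 0 then 0 else Tc r (m+2) (k-1)) - Tc r (m+1) k :=
        Tc_rec r (m+1) k hk
      have hrec2 : Tc r (m+2) k
          = Tc r (m+1) (k+1) + (if k = 0 then 0 else Tc r (m+1) (k-1)) - Tc r m k :=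
        Tc_rec r m k hk
      have hkk := ih1 k hk
      show Tc r (m+3) k + Tc r (m+2) k = _
      rw [hrec1, hrec2]
      by_cases hk1 : k + 1 < r
      · have h1 := ih2 (k+1) hk1
        have h1' := ih1 (k+1) hk1
        by_cases hk0 : k = 0
        · subst hk0
          rw [if_pos rfl, if_pos rfl]
          omega
        · have h0 := ih2 (k-1) (by omega)
          have h0' := ih1 (k-1) (by omega)
          rw [if_neg hk0, if_neg hk0]
          omega
      · have hz2 : Tc r (m+2) (k+1) = 0 := Tc_ge r (m+2) (k+1) hk1
        have hz1 : Tc r (m+1) (k+1) = 0 := Tc_ge r (m+1) (k+1) hk1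
        have hk0 : k ≠ 0 := by intro h; subst h; omega
        have h0 := ih2 (k-1) (by omega)
        have h0' := ih1 (k-1) (by omega)
        rw [if_neg hk0, if_neg hk0, hz2, hz1]
        omega


lemma prod_double (m : ℕ) :
    ∏ k ∈ Finset.range m, (2 * ((k : ℤ) + 1)) = 2 ^ m * (Nat.factorial m : ℤ) := by
  induction m with
  | zero => simp
  | succ m ih =>
    rw [Finset.prod_range_succ, ih, Nat.factorial_succ]
    push_cast
    ring

lemma prod_right (r n : ℕ) (h1 : 1 ≤ n) (h2 : 2 * n ≤ r + 1) :
    ∏ k ∈ Finset.Ico (r - n + 1) r, (2 * ((r : ℤ) - (k : ℕ)))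
      = 2 ^ (n - 1) * (Nat.factorial (n - 1) : ℤ) := by
  rw [← prod_double, Finset.range_eq_Ico]
  apply Finset.prod_nbij' (i := fun k => r - 1 - k) (j := fun k => r - 1 - k)
  · intro a ha
    simp only [Finset.mem_Ico] at *
    omega
  · intro a ha
    simp only [Finset.mem_Ico] at *
    omega
  · intro a ha
    simp only [Finset.mem_Ico] at ha
    omega
  · intro a ha
    simp only [Finset.mem_Ico] at ha
    omega
  · intro a ha
    simp only [Finset.mem_Ico] at ha
    have : ((r - 1 - a : ℕ) : ℤ) = (r : ℤ) - 1 - a := by omega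
    rw [this]
    ring

lemma prod_min_eq (r n : ℕ) (h1 : 1 ≤ n) (h2 : 2 * n ≤ r + 1) :
    ∏ k ∈ Finset.range r,
        min (2 * ((k : ℤ) + 1)) (min (2 * ((r : ℤ) - (k : ℕ))) (2 * (n : ℤ) - 1))
      = 4 ^ (n - 1) * (Nat.factorial (n - 1) : ℤ) ^ 2 *
          ((2 * n - 1 : ℕ) : ℤ) ^ ((r + 1) - 2 * n + 1) := by
  rw [Finset.range_eq_Ico,
    ← Finset.prod_Ico_consecutive _ (by omega : 0 ≤ n - 1) (by omega : n - 1 ≤ r),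
    ← Finset.prod_Ico_consecutive _ (by omega : n - 1 ≤ r - n + 1) (by omega : r - n + 1 ≤ r)]
  have e1 : ∏ k ∈ Finset.Ico 0 (n - 1),
      min (2 * ((k : ℤ) + 1)) (min (2 * ((r : ℤ) - (k : ℕ))) (2 * (n : ℤ) - 1))
      = 2 ^ (n - 1) * (Nat.factorial (n - 1) : ℤ) := by
    rw [← prod_double, ← Finset.range_eq_Ico]
    apply Finset.prod_congr rfl
    intro k hk
    simp only [Finset.mem_range] at hk
    omega
  have e2 : ∏ k ∈ Finset.Ico (n - 1) (r - n + 1),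
      min (2 * ((k : ℤ) + 1)) (min (2 * ((r : ℤ) - (k : ℕ))) (2 * (n : ℤ) - 1))
      = ((2 * n - 1 : ℕ) : ℤ) ^ ((r + 1) - 2 * n + 1) := by
    rw [Finset.prod_congr rfl (fun k hk => ?_), Finset.prod_const, Nat.card_Ico]
    · congr 1
      omega
    · simp only [Finset.mem_Ico] at hk
      omega
  have e3 : ∏ k ∈ Finset.Ico (r - n + 1) r,
      min (2 * ((k : ℤ) + 1)) (min (2 * ((r : ℤ) - (k : ℕ))) (2 * (n : ℤ) - 1))
      = 2 ^ (n - 1) * (Nat.factorial (n - 1) : ℤ) := by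
    rw [← prod_right r n h1 h2]
    apply Finset.prod_congr rfl
    intro k hk
    simp only [Finset.mem_Ico] at hk
    omega
  rw [e1, e2, e3]
  rw [show (4 : ℤ) = 2 * 2 from rfl, mul_pow]
  ring

/-- Row products of the column sums `λ_{n,b} = ∑_a (F_n + F_{n−1})_{a,b}` of
the `SU(2)` fusion matrices for `A_r`: with `N = r+1`, for `1 ≤ n`, `2n ≤ N`:
`∏_{b=1}^{N−1} λ_{n,b} = 4^{n−1} · ((n−1)!)² · (2n−1)^{N−2n+1}`. -/
theorem fusion_rowProducts_Ar (r : ℕ) (hr : 1 ≤ r) (n : ℕ) (hn : 1 ≤ n)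
    (hn2 : 2 * n ≤ r + 1) :
    ∏ b : Fin r, (∑ a : Fin r, (fusF r n + fusF r (n - 1)) a b)
    = 4 ^ (n - 1) * ((Nat.factorial (n - 1) : ℤ)) ^ 2 *
        ((2 * n - 1 : ℕ) : ℤ) ^ ((r + 1) - 2 * n + 1) := by
  have hb : ∀ b : Fin r, (∑ a : Fin r, (fusF r n + fusF r (n - 1)) a b)
      = min (2 * ((b : ℤ) + 1)) (min (2 * ((r : ℤ) - (b : ℕ))) (2 * (n : ℤ) - 1)) := by
    intro b
    have h1 : (∑ a : Fin r, (fusF r n + fusF r (n - 1)) a b)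
        = Tc r n (b : ℕ) + Tc r (n - 1) (b : ℕ) := by
      simp only [Matrix.add_apply, Finset.sum_add_distrib, Tc, dif_pos b.isLt, Fin.eta]
    rw [h1, lam_eq r n hn hn2 (b : ℕ) b.isLt]
  rw [Finset.prod_congr rfl (fun b _ => hb b),
    Fin.prod_univ_eq_prod_range
      (fun k => min (2 * ((k : ℤ) + 1)) (min (2 * ((r : ℤ) - (k : ℕ))) (2 * (n : ℤ) - 1))) r,
    prod_min_eq r n hn hn2]
end

section
/- Odd-power product identity used in the evaluation of the A_r fusion product formula: for every integer s ≥ 1, ∏_{n=1}^{s} (2n−1)^{2s−2n+1} = sf(2s−1) / ( 2^{s(s−1)} · sf(s−1)² ), equivalently 2^{s(s−1)} · sf(s−1)² · ∏_{n=1}^{s} (2n−1)^{2s−2n+1} = sf(2s−1), where sf(m) = ∏_{j=1}^{m} j! (with sf(0) = 1). -/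
open Finset

/-- The superfactorial `sf(m) = ∏_{j=1}^m j!` (with `sf 0 = 1`). -/
def sf (m : ℕ) : ℕ := ∏ j ∈ Finset.Icc 1 m, Nat.factorial j

lemma sf_succ (m : ℕ) : sf (m + 1) = sf m * Nat.factorial (m + 1) := by
  unfold sf
  rw [Finset.prod_Icc_succ_top (by omega)]

lemma doubleFac (s : ℕ) :
    2 ^ s * Nat.factorial s * ∏ n ∈ Finset.Icc 1 s, (2 * n - 1)
      = Nat.factorial (2 * s) := by
  induction s with
  | zero => simp
  | succ k ih =>
    rw [Finset.prod_Icc_succ_top (by omega)]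
    have h1 : 2 * (k + 1) - 1 = 2 * k + 1 := by omega
    have h2 : 2 * (k + 1) = 2 * k + 1 + 1 := by ring
    rw [h1, h2, Nat.factorial_succ (2 * k + 1), Nat.factorial_succ (2 * k), ← ih,
      pow_succ, Nat.factorial_succ k]
    ring

lemma aux (k : ℕ) :
    2 ^ ((k + 1) * k) * sf k ^ 2 *
      ∏ n ∈ Finset.Icc 1 (k + 1), (2 * n - 1) ^ (2 * (k + 1) - 2 * n + 1)
    = sf (2 * k + 1) := by
  induction k with
  | zero => simp [sf]
  | succ k ih =>
    rw [Finset.prod_Icc_succ_top (by omega)]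
    have hprod : ∏ n ∈ Finset.Icc 1 (k + 1), (2 * n - 1) ^ (2 * (k + 1 + 1) - 2 * n + 1)
        = (∏ n ∈ Finset.Icc 1 (k + 1), (2 * n - 1) ^ (2 * (k + 1) - 2 * n + 1)) *
          (∏ n ∈ Finset.Icc 1 (k + 1), (2 * n - 1)) ^ 2 := by
      rw [← Finset.prod_pow, ← Finset.prod_mul_distrib]
      refine Finset.prod_congr rfl fun n hn => ?_
      simp only [Finset.mem_Icc] at hn
      rw [← pow_add]
      congr 1
      omega
    rw [hprod]
    have h1 : 2 * (k + 1 + 1) - 1 = 2 * k + 3 := by omega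
    have h2 : 2 * (k + 1 + 1) - 2 * (k + 1 + 1) + 1 = 1 := by omega
    have h3 : 2 * (k + 1) + 1 = 2 * k + 1 + 1 + 1 := by ring
    rw [h1, h2, h3, sf_succ, sf_succ, sf_succ, ← ih,
      show 2 * k + 1 + 1 = 2 * (k + 1) from by ring,
      show 2 * k + 2 + 1 = 2 * (k + 1) + 1 from by ring,
      Nat.factorial_succ (2 * (k + 1)), ← doubleFac (k + 1),
      show ((k + 1 + 1) * (k + 1)) = (k + 1) * k + (k + 1) * 2 from by ring,
      pow_add, pow_mul]
    ring

/-- Odd-power product identity used in the evaluation of the `A_r` fusion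
product formula: for `s ≥ 1`,
`2^{s(s−1)} · sf(s−1)² · ∏_{n=1}^s (2n−1)^{2s−2n+1} = sf(2s−1)`. -/
theorem oddPower_product_superfactorial (s : ℕ) (hs : 1 ≤ s) :
    2 ^ (s * (s - 1)) * sf (s - 1) ^ 2 *
      ∏ n ∈ Finset.Icc 1 s, (2 * n - 1) ^ (2 * s - 2 * n + 1)
    = sf (2 * s - 1) := by
  obtain ⟨k, rfl⟩ : ∃ k, s = k + 1 := ⟨s - 1, by omega⟩
  have h1 : k + 1 - 1 = k := by omega
  have h2 : 2 * (k + 1) - 1 = 2 * k + 1 := by omega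
  rw [h1, h2]
  exact aux k
end

section
/- Periodicity of SU(2) fusion matrices for A_r: let r ≥ 1, N = r+1, let G be the r×r adjacency matrix of the path graph on r vertices (G_{ab}=1 iff |a−b|=1), and define F_0 = 0, F_1 = I, F_{n+1} = F_n·G − F_{n−1}. Then F_N = 0; for all integers m with 0 ≤ m ≤ N, F_{N+m} = −F_{N−m}; and consequently F_{n+2N} = F_n for all n ≥ 0. -/
open Finset

def ff (N n i j : ℤ) : ℤ :=
  if i - j < n ∧ j - i < n ∧ n < i + j ∧ n + i + j < 2*N ∧ (n + i + j) % 2 = 1 then 1 else 0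

lemma ff_key (N n i j : ℤ) (hi2 : i ≤ N - 1) (hj1 : 1 ≤ j) (hj2 : j ≤ N - 1)
    (hn : 0 ≤ n) (hnN : n + 2 ≤ N) :
    ff N (n+1) i (j-1) + ff N (n+1) i (j+1) - ff N n i j = ff N (n+2) i j := by
  unfold ff; split_ifs <;> omega

lemma ff_left (N n i : ℤ) : ff N n i 0 = 0 := by
  unfold ff; split_ifs with h; · omega
  · rfl

lemma ff_right (N n i : ℤ) : ff N n i N = 0 := by
  unfold ff; split_ifs with h; · omega
  · rfl

lemma fusF_rec (r n : ℕ) : fusF r (n+2) = fusF r (n+1) * pathG r - fusF r n := rfl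

lemma sum_pick (r t : ℕ) (ht : t < r) (g : Fin r → ℤ) :
    ∑ k : Fin r, (if (k:ℕ) = t then g k else 0) = g ⟨t, ht⟩ := by
  rw [Finset.sum_eq_single (⟨t, ht⟩ : Fin r)]
  · simp
  · intro k _ hk
    exact if_neg (fun h => hk (Fin.ext h))
  · exact fun h => absurd (Finset.mem_univ _) h

lemma formula (r : ℕ) : ∀ n, n ≤ r + 1 → ∀ a b : Fin r,
    fusF r n a b = ff ((r:ℤ)+1) n ((a:ℤ)+1) ((b:ℤ)+1) := by
  intro n
  induction n using Nat.strong_induction_on with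
  | _ n ih =>
    match n with
    | 0 =>
      intro _ a b
      simp only [fusF, Matrix.zero_apply, ff]
      rw [if_neg]; omega
    | 1 =>
      intro _ a b
      have hb := b.isLt
      have ha := a.isLt
      by_cases h : a = b
      · subst h
        rw [show fusF r 1 = 1 from rfl, Matrix.one_apply_eq]
        unfold ff; rw [if_pos]; push_cast; omega
      · rw [show fusF r 1 = 1 from rfl, Matrix.one_apply_ne h]
        unfold ff; rw [if_neg]
        intro hc
        exact h (Fin.ext (by push_cast at hc; omega))
    | n + 2 =>
      intro hle a b
      have ha := a.isLt
      have hb := b.isLt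
      have step1 : fusF r (n+2) a b
          = (∑ k : Fin r, fusF r (n+1) a k * pathG r k b) - fusF r n a b := by
        rw [fusF_rec]; simp [Matrix.sub_apply, Matrix.mul_apply]
      have hsum : (∑ k : Fin r, fusF r (n+1) a k * pathG r k b)
          = (∑ k : Fin r, (if (k:ℕ)+1 = (b:ℕ) then ff ((r:ℤ)+1) ((n:ℤ)+1) ((a:ℤ)+1) ((k:ℤ)+1) else 0))
          + (∑ k : Fin r, (if (b:ℕ)+1 = (k:ℕ) then ff ((r:ℤ)+1) ((n:ℤ)+1) ((a:ℤ)+1) ((k:ℤ)+1) else 0)) := by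
        rw [← Finset.sum_add_distrib]
        apply Finset.sum_congr rfl
        intro k _
        rw [ih (n+1) (by omega) (by omega)]
        simp only [pathG, Matrix.of_apply]
        push_cast
        split_ifs with h1 h2 h3 h4 h5 h6 <;> first | (exfalso; omega) | ring
      have s1 : (∑ k : Fin r, (if (k:ℕ)+1 = (b:ℕ) then ff ((r:ℤ)+1) ((n:ℤ)+1) ((a:ℤ)+1) ((k:ℤ)+1) else 0))
          = ff ((r:ℤ)+1) ((n:ℤ)+1) ((a:ℤ)+1) ((b:ℤ)+1-1) := by
        rcases Nat.eq_zero_or_pos (b:ℕ) with h0 | h0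
        · rw [Finset.sum_eq_zero (by intro k _; rw [if_neg]; omega)]
          have h1 : ((b:ℤ)+1-1) = 0 := by omega
          rw [h1, ff_left]
        · have hm : (b:ℕ) - 1 < r := by omega
          have h1 : (∑ k : Fin r, (if (k:ℕ)+1 = (b:ℕ) then ff ((r:ℤ)+1) ((n:ℤ)+1) ((a:ℤ)+1) ((k:ℤ)+1) else 0))
              = ∑ k : Fin r, (if (k:ℕ) = (b:ℕ)-1 then ff ((r:ℤ)+1) ((n:ℤ)+1) ((a:ℤ)+1) ((k:ℤ)+1) else 0) := by
            apply Finset.sum_congr rfl; intro k _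
            congr 1
            simp only [eq_iff_iff]; omega
          rw [h1, sum_pick r ((b:ℕ)-1) hm]
          congr 1
          have : (((b:ℕ) - 1 : ℕ) : ℤ) = (b:ℤ) - 1 := by omega
          rw [this]; ring
      have s2 : (∑ k : Fin r, (if (b:ℕ)+1 = (k:ℕ) then ff ((r:ℤ)+1) ((n:ℤ)+1) ((a:ℤ)+1) ((k:ℤ)+1) else 0))
          = ff ((r:ℤ)+1) ((n:ℤ)+1) ((a:ℤ)+1) ((b:ℤ)+1+1) := by
        rcases lt_or_ge ((b:ℕ)+1) r with h0 | h0
        · have h1 : (∑ k : Fin r, (if (b:ℕ)+1 = (k:ℕ) then ff ((r:ℤ)+1) ((n:ℤ)+1) ((a:ℤ)+1) ((k:ℤ)+1) else 0))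
              = ∑ k : Fin r, (if (k:ℕ) = (b:ℕ)+1 then ff ((r:ℤ)+1) ((n:ℤ)+1) ((a:ℤ)+1) ((k:ℤ)+1) else 0) := by
            apply Finset.sum_congr rfl; intro k _
            congr 1
            simp only [eq_iff_iff]; omega
          rw [h1, sum_pick r ((b:ℕ)+1) h0]
          congr 1
        · rw [Finset.sum_eq_zero (by intro k _; rw [if_neg]; have := k.isLt; omega)]
          have h1 : ((b:ℤ)+1+1) = (r:ℤ)+1 := by omega
          rw [h1, ff_right]
      rw [step1, hsum, s1, s2, ih n (by omega) (by omega)]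
      push_cast
      exact ff_key ((r:ℤ)+1) n ((a:ℤ)+1) ((b:ℤ)+1) (by omega) (by omega) (by omega)
        (by omega) (by omega)


/-- Periodicity of the `SU(2)` fusion matrices for `A_r`: with `N = r+1`,
`F_N = 0`; `F_{N+m} = −F_{N−m}` for `0 ≤ m ≤ N`; and `F_{n+2N} = F_n` for
all `n ≥ 0`. -/
theorem fusion_periodicity_Ar (r : ℕ) (hr : 1 ≤ r) :
    fusF r (r + 1) = 0 ∧
    (∀ m : ℕ, m ≤ r + 1 → fusF r ((r + 1) + m) = -fusF r ((r + 1) - m)) ∧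
    (∀ n : ℕ, fusF r (n + 2 * (r + 1)) = fusF r n) := by
  have hN : fusF r (r+1) = 0 := by
    ext a b
    rw [formula r (r+1) le_rfl a b]
    have ha := a.isLt; have hb := b.isLt
    simp only [Matrix.zero_apply]
    unfold ff; rw [if_neg]
    push_cast; omega
  have hneg : ∀ m, m ≤ r+1 → fusF r ((r+1)+m) = -fusF r ((r+1)-m) := by
    intro m
    induction m using Nat.strong_induction_on with
    | _ m ih =>
      match m with
      | 0 => intro _; simp [hN]
      | 1 =>
        intro _
        rw [show (r+1)+1 = r+2 from rfl, fusF_rec r r, hN,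
          show (r+1)-1 = r from rfl]
        simp
      | m+2 =>
        intro hle
        have e1 : (r+1)+(m+2) = ((r+1)+m)+2 := by omega
        rw [e1, fusF_rec, show (r+1)+m+1 = (r+1)+(m+1) from by omega,
          ih (m+1) (by omega) (by omega), ih m (by omega) (by omega)]
        have hk : m + 2 ≤ r + 1 := hle
        rw [show (r+1)-(m+1) = (r-m-1)+1 from by omega,
          show (r+1)-m = (r-m-1)+2 from by omega,
          show (r+1)-(m+2) = r-m-1 from by omega,
          fusF_rec r (r-m-1)]
        noncomm_ring
  refine ⟨hN, hneg, ?_⟩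
  intro n
  induction n using Nat.strong_induction_on with
  | _ n ih =>
    match n with
    | 0 =>
      rw [show 0 + 2*(r+1) = (r+1)+(r+1) from by omega,
        hneg (r+1) le_rfl, show (r+1)-(r+1) = 0 from by omega]
      simp [fusF]
    | 1 =>
      have h2 : fusF r (2*r+2) = 0 := by
        rw [show 2*r+2 = (r+1)+(r+1) from by omega, hneg (r+1) le_rfl,
          show (r+1)-(r+1) = 0 from by omega]
        simp [fusF]
      have h1 : fusF r (2*r+1) = -fusF r 1 := by
        rw [show 2*r+1 = (r+1)+r from by omega, hneg r (by omega),
          show (r+1)-r = 1 from by omega]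
      rw [show 1+2*(r+1) = (2*r+1)+2 from by omega, fusF_rec,
        show 2*r+1+1 = 2*r+2 from rfl, h2, h1]
      simp
    | n+2 =>
      rw [show n+2+2*(r+1) = (n+2*(r+1))+2 from by omega, fusF_rec,
        show n+2*(r+1)+1 = (n+1)+2*(r+1) from by omega,
        ih (n+1) (by omega), ih n (by omega), fusF_rec]
end

section
/- Verlinde formula for SU(2): let k ≥ 0, N = k+2, let G be the (k+1)×(k+1) adjacency matrix of the path graph on k+1 vertices, and define F_0 = 0, F_1 = I, F_{n+1} = F_n·G − F_{n−1}. Then for all integers n, a, b with 1 ≤ n, a, b ≤ N−1: (F_n)_{a,b} = (2/N) · ∑_{j=1}^{N−1} sin(πnj/N)·sin(πaj/N)·sin(πbj/N) / sin(πj/N). (Equivalently, (F_n)_{a,b} = ∑_j S_{n,j}S_{a,j}S_{b,j}/S_{1,j}, where S_{m,n} = √(2/N)·sin(πmn/N) is the modular S-matrix of A_k(SU(2)).) -/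
open Real Finset

private lemma sin_add_sin' (x y : ℝ) :
    Real.sin x + Real.sin y = 2 * Real.sin ((x+y)/2) * Real.cos ((x-y)/2) := by
  have := Real.sin_sub_sin x (-y)
  simpa [sub_neg_eq_add, sub_eq_add_neg] using this

private lemma vsin_pos (k j : ℕ) (h1 : 1 ≤ j) (h2 : j ≤ k+1) :
    0 < Real.sin (π * j / ((k:ℝ)+2)) := by
  apply Real.sin_pos_of_pos_of_lt_pi
  · have : (0:ℝ) < (j:ℝ) := by exact_mod_cast h1
    positivity
  · rw [div_lt_iff₀ (by positivity)]
    have hj : (j:ℝ) < (k:ℝ)+2 := by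
      have : j < k+2 := by omega
      exact_mod_cast this
    nlinarith [Real.pi_pos]

private lemma cos_sum (k m : ℕ) (hm : 1 ≤ m) (hm2 : m ≤ 2*k+2) :
    ∑ j ∈ Icc 1 (k+1), Real.cos (π * m * j / ((k:ℝ)+2))
      = if Even m then (-1:ℝ) else 0 := by
  have hN : (0:ℝ) < (k:ℝ)+2 := by positivity
  set α : ℝ := π * m / ((k:ℝ)+2) with hα
  have hhalf1 : 0 < α/2 := by
    have : (0:ℝ) < (m:ℝ) := by exact_mod_cast hm
    positivity
  have hhalf2 : α/2 < π := by
    rw [hα, div_div, div_lt_iff₀ (by positivity)]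
    have hmlt : (m:ℝ) < 2*((k:ℝ)+2) := by
      have h : (m:ℝ) < 2*(k:ℝ)+4 := by exact_mod_cast (show m < 2*k+4 by omega)
      linarith
    nlinarith [Real.pi_pos]
  have hs : Real.sin (α/2) ≠ 0 := ne_of_gt (Real.sin_pos_of_pos_of_lt_pi hhalf1 hhalf2)
  have key : ∀ j : ℕ, 2 * Real.sin (α/2) * Real.cos (π * m * j / ((k:ℝ)+2))
      = Real.sin ((j+1)*α - α/2) - Real.sin (j*α - α/2) := by
    intro j
    rw [Real.sin_sub_sin]
    have h1 : ((j:ℝ)+1)*α - α/2 - (j*α - α/2) = α := by ring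
    have h2 : (((j:ℝ)+1)*α - α/2 + (j*α - α/2))/2 = j * α := by ring
    rw [show (((j:ℝ)+1)*α - α/2 - ((j:ℝ)*α - α/2))/2 = α/2 by ring, h2]
    rw [hα]; ring_nf
  have tele : ∑ j ∈ Icc 1 (k+1), (2 * Real.sin (α/2) * Real.cos (π * m * j / ((k:ℝ)+2)))
      = Real.sin ((k+1+1:ℕ)*α - α/2) - Real.sin ((1:ℕ)*α - α/2) := by
    have : Icc 1 (k+1) = Ico 1 (k+2) := by rfl
    rw [this, Finset.sum_Ico_eq_sum_range]
    have : ∀ j ∈ Finset.range (k+2-1), 2 * Real.sin (α/2) * Real.cos (π * m * (1+j:ℕ) / ((k:ℝ)+2))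
        = (fun i : ℕ => Real.sin (((i:ℝ)+1)*α - α/2)) (j+1) - (fun i : ℕ => Real.sin (((i:ℝ)+1)*α - α/2)) j := by
      intro j _
      have := key (1+j)
      push_cast at this ⊢
      rw [this]; ring_nf
    rw [Finset.sum_congr rfl this, Finset.sum_range_sub (fun i : ℕ => Real.sin (((i:ℝ)+1)*α - α/2))]
    push_cast
    ring_nf
  rw [← Finset.mul_sum] at tele
  have hcos : Real.cos (π * m) = if Even m then (1:ℝ) else -1 := by
    rcases Nat.even_or_odd m with he | ho
    · rw [if_pos he]
      obtain ⟨t, rfl⟩ := he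
      have h1 : π * (((t:ℕ):ℝ) + t) = (t:ℝ) * (2 * π) := by ring
      push_cast [h1]
      exact Real.cos_nat_mul_two_pi t
    · rw [if_neg (Nat.not_even_iff_odd.mpr ho)]
      obtain ⟨t, rfl⟩ := ho
      have h1 : π * ((2*(t:ℕ)+1:ℕ):ℝ) = (t:ℝ) * (2 * π) + π := by push_cast; ring
      rw [h1, Real.cos_add, Real.cos_nat_mul_two_pi, Real.cos_pi, Real.sin_pi]
      ring
  have hNα : Real.sin (((k:ℝ)+1+1)*α - α/2) = - Real.cos (π*m) * Real.sin (α/2) := by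
    have h2 : ((k:ℝ)+1+1)*α = π*m := by rw [hα]; field_simp; ring
    rw [h2, Real.sin_sub]
    have : Real.sin (π * m) = 0 := by
      rw [mul_comm]; exact Real.sin_nat_mul_pi m
    rw [this]; ring
  have h1α : Real.sin ((1:ℝ)*α - α/2) = Real.sin (α/2) := by
    congr 1; ring
  push_cast at tele
  rw [hNα, h1α, hcos] at tele
  apply mul_left_cancel₀ (show 2 * Real.sin (α/2) ≠ 0 by
    exact mul_ne_zero two_ne_zero hs)
  rw [tele]
  split_ifs <;> ring

private lemma orth_le (k a b : ℕ) (hb1 : 1 ≤ b) (hba : b ≤ a) (ha2 : a ≤ k+1) :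
    ∑ j ∈ Icc 1 (k+1), Real.sin (π*a*j/((k:ℝ)+2)) * Real.sin (π*b*j/((k:ℝ)+2))
      = if a = b then ((k:ℝ)+2)/2 else 0 := by
  have hcast : ((a-b:ℕ):ℝ) = (a:ℝ)-(b:ℝ) := by
    push_cast [hba]; ring
  have pt : ∀ j:ℕ, Real.sin (π*a*j/((k:ℝ)+2)) * Real.sin (π*b*j/((k:ℝ)+2))
      = (Real.cos (π*((a-b:ℕ):ℝ)*j/((k:ℝ)+2)) - Real.cos (π*((a+b:ℕ):ℝ)*j/((k:ℝ)+2)))/2 := by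
    intro j
    rw [hcast, Real.cos_sub_cos]
    push_cast
    rw [show (π*((a:ℝ)-b)*j/((k:ℝ)+2) + π*((a:ℝ)+b)*j/((k:ℝ)+2))/2 = π*a*j/((k:ℝ)+2) by ring]
    rw [show (π*((a:ℝ)-b)*j/((k:ℝ)+2) - π*((a:ℝ)+b)*j/((k:ℝ)+2))/2 = -(π*b*j/((k:ℝ)+2)) by ring]
    rw [Real.sin_neg]; ring
  rw [Finset.sum_congr rfl (fun j _ => pt j)]
  rw [← Finset.sum_div, Finset.sum_sub_distrib]
  have hsum2 : ∑ j ∈ Icc 1 (k+1), Real.cos (π*((a+b:ℕ):ℝ)*j/((k:ℝ)+2))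
      = if Even (a+b) then (-1:ℝ) else 0 := cos_sum k (a+b) (by omega) (by omega)
  by_cases hab : a = b
  · subst hab
    have hz : ∀ j ∈ Icc 1 (k+1), Real.cos (π*((a-a:ℕ):ℝ)*j/((k:ℝ)+2)) = (1:ℝ) := by
      intro j _
      simp
    rw [Finset.sum_congr rfl hz, hsum2, if_pos (by exact Even.add_self a)]
    simp [Nat.card_Icc]
    ring
  · have hsum1 : ∑ j ∈ Icc 1 (k+1), Real.cos (π*((a-b:ℕ):ℝ)*j/((k:ℝ)+2))
        = if Even (a-b) then (-1:ℝ) else 0 := cos_sum k (a-b) (by omega) (by omega)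
    rw [hsum1, hsum2, if_neg hab]
    have hpar : Even (a-b) ↔ Even (a+b) := by
      rw [Nat.even_sub hba, Nat.even_add]
    rcases Nat.even_or_odd (a+b) with he | ho
    · rw [if_pos (hpar.mpr he), if_pos he]; ring
    · have h1 := Nat.not_even_iff_odd.mpr ho
      rw [if_neg (by rw [hpar]; exact h1), if_neg h1]; ring

private lemma orth (k a b : ℕ) (ha1 : 1 ≤ a) (ha2 : a ≤ k+1) (hb1 : 1 ≤ b) (hb2 : b ≤ k+1) :
    ∑ j ∈ Icc 1 (k+1), Real.sin (π*a*j/((k:ℝ)+2)) * Real.sin (π*b*j/((k:ℝ)+2))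
      = if a = b then ((k:ℝ)+2)/2 else 0 := by
  rcases le_or_gt b a with h | h
  · exact orth_le k a b hb1 h ha2
  · have := orth_le k b a ha1 (le_of_lt h) hb2
    have hcomm : ∑ j ∈ Icc 1 (k+1), Real.sin (π*a*j/((k:ℝ)+2)) * Real.sin (π*b*j/((k:ℝ)+2))
        = ∑ j ∈ Icc 1 (k+1), Real.sin (π*b*j/((k:ℝ)+2)) * Real.sin (π*a*j/((k:ℝ)+2)) :=
      Finset.sum_congr rfl (fun j _ => mul_comm _ _)
    rw [hcomm, this]
    by_cases hab : a = b
    · simp [hab]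
    · rw [if_neg (fun hh => hab hh.symm), if_neg hab]

private lemma eigen (k j : ℕ) (b : Fin (k+1)) :
    ∑ c : Fin (k+1), Real.sin (π*(((c:ℕ)+1:ℕ):ℝ)*j/((k:ℝ)+2)) * ((pathG (k+1) c b : ℤ):ℝ)
      = 2 * Real.cos (π*j/((k:ℝ)+2)) * Real.sin (π*(((b:ℕ)+1:ℕ):ℝ)*j/((k:ℝ)+2)) := by
  set s : ℕ → ℝ := fun m => Real.sin (π*(m:ℝ)*j/((k:ℝ)+2)) with hs
  have hB : (b:ℕ) ≤ k := Nat.lt_succ_iff.mp b.isLt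
  have hsum : ∑ c : Fin (k+1), Real.sin (π*(((c:ℕ)+1:ℕ):ℝ)*j/((k:ℝ)+2)) * ((pathG (k+1) c b : ℤ):ℝ)
      = ∑ c ∈ range (k+1), s (c+1) * (if c + 1 = (b:ℕ) ∨ (b:ℕ) + 1 = c then 1 else 0) := by
    rw [← Fin.sum_univ_eq_sum_range (fun c => s (c+1) * (if c + 1 = (b:ℕ) ∨ (b:ℕ) + 1 = c then 1 else 0)) (k+1)]
    apply Finset.sum_congr rfl
    intro c _
    simp only [pathG, Matrix.of_apply, hs]
    split_ifs <;> simp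
  rw [hsum]
  have hsplit : ∀ c ∈ range (k+1),
      s (c+1) * (if c + 1 = (b:ℕ) ∨ (b:ℕ) + 1 = c then 1 else 0)
      = (if c + 1 = (b:ℕ) then s (b:ℕ) else 0) + (if c = (b:ℕ) + 1 then s ((b:ℕ)+2) else 0) := by
    intro c _
    by_cases h1 : c + 1 = (b:ℕ)
    · rw [if_pos (Or.inl h1), if_pos h1, if_neg (by omega)]
      rw [← h1]; ring
    · by_cases h2 : c = (b:ℕ) + 1
      · rw [if_pos (Or.inr h2.symm), if_neg h1, if_pos h2, h2]
        ring_nf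
      · rw [if_neg (by omega), if_neg h1, if_neg h2]; ring
  rw [Finset.sum_congr rfl hsplit, Finset.sum_add_distrib]
  have hfirst : ∑ c ∈ range (k+1), (if c + 1 = (b:ℕ) then s (b:ℕ) else 0) = s (b:ℕ) := by
    rcases Nat.eq_zero_or_pos (b:ℕ) with h0 | hpos
    · rw [h0]
      simp [hs]
    · obtain ⟨B', hB'⟩ : ∃ B', (b:ℕ) = B' + 1 := ⟨(b:ℕ)-1, by omega⟩
      rw [hB']
      have hc : ∀ c ∈ range (k+1), (if c + 1 = B' + 1 then s (B'+1) else 0) = (if c = B' then s (B'+1) else 0) := by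
        intro c _; simp
      rw [Finset.sum_congr rfl hc]
      rw [Finset.sum_ite_eq' (range (k+1)) B' (fun _ => s (B'+1))]
      rw [if_pos (by simp; omega)]
  have hsecond : ∑ c ∈ range (k+1), (if c = (b:ℕ) + 1 then s ((b:ℕ)+2) else 0) = s ((b:ℕ)+2) := by
    rcases Nat.lt_or_ge ((b:ℕ)+1) (k+1) with hlt | hge
    · rw [Finset.sum_ite_eq' (range (k+1)) ((b:ℕ)+1) (fun _ => s ((b:ℕ)+2))]
      rw [if_pos (Finset.mem_range.mpr hlt)]
    · have hbk : (b:ℕ) = k := by omega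
      have hz : s ((b:ℕ)+2) = 0 := by
        rw [hs, hbk]
        have : π*(((k+2:ℕ)):ℝ)*j/((k:ℝ)+2) = (j:ℝ)*π := by
          push_cast
          field_simp
        push_cast at this ⊢
        rw [this]
        exact Real.sin_nat_mul_pi j
      rw [hz]
      apply Finset.sum_eq_zero
      intro c hc
      rw [if_neg (by simp at hc; omega)]
  rw [hfirst, hsecond, hs]
  have := sin_add_sin' (π*((b:ℕ):ℝ)*j/((k:ℝ)+2)) (π*(((b:ℕ):ℝ)+2)*j/((k:ℝ)+2))
  push_cast
  rw [this]
  rw [show (π*((b:ℕ):ℝ)*j/((k:ℝ)+2) + π*(((b:ℕ):ℝ)+2)*j/((k:ℝ)+2))/2 = π*(((b:ℕ):ℝ)+1)*j/((k:ℝ)+2) by ring]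
  rw [show (π*((b:ℕ):ℝ)*j/((k:ℝ)+2) - π*(((b:ℕ):ℝ)+2)*j/((k:ℝ)+2))/2 = -(π*j/((k:ℝ)+2)) by ring]
  rw [Real.cos_neg]
  ring

private noncomputable def Rh (k n A B : ℕ) : ℝ :=
  (2/((k:ℝ)+2)) * ∑ j ∈ Icc 1 (k+1),
    Real.sin (π*(n:ℝ)*j/((k:ℝ)+2)) * Real.sin (π*(A:ℝ)*j/((k:ℝ)+2)) * Real.sin (π*(B:ℝ)*j/((k:ℝ)+2))
      / Real.sin (π*(j:ℝ)/((k:ℝ)+2))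

private noncomputable def sn (k m j : ℕ) : ℝ := Real.sin (π*(m:ℝ)*(j:ℝ)/((k:ℝ)+2))

private noncomputable def dn (k j : ℕ) : ℝ := Real.sin (π*(j:ℝ)/((k:ℝ)+2))

private lemma Rh_eq (k n A B : ℕ) : Rh k n A B
    = (2/((k:ℝ)+2)) * ∑ j ∈ Icc 1 (k+1), sn k n j * sn k A j * sn k B j / dn k j := rfl

private lemma eigen' (k j : ℕ) (b : Fin (k+1)) :
    ∑ c : Fin (k+1), sn k ((c:ℕ)+1) j * ((pathG (k+1) c b : ℤ):ℝ)
      = 2 * Real.cos (π*(j:ℝ)/((k:ℝ)+2)) * sn k ((b:ℕ)+1) j := eigen k j b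

private lemma Rmain (k : ℕ) : ∀ (n : ℕ) (a b : Fin (k+1)),
    ((fusF (k+1) n a b : ℤ):ℝ) = Rh k n ((a:ℕ)+1) ((b:ℕ)+1)
  | 0, a, b => by
    show ((0:ℤ):ℝ) = _
    rw [Rh]
    simp
  | 1, a, b => by
    have hA1 : 1 ≤ (a:ℕ)+1 := le_refl 1 |>.trans (by omega)
    have hA2 : (a:ℕ)+1 ≤ k+1 := by have := a.isLt; omega
    have hB1 : 1 ≤ (b:ℕ)+1 := by omega
    have hB2 : (b:ℕ)+1 ≤ k+1 := by have := b.isLt; omega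
    have hterm : ∀ j ∈ Icc 1 (k+1),
        Real.sin (π*((1:ℕ):ℝ)*j/((k:ℝ)+2)) * Real.sin (π*(((a:ℕ)+1:ℕ):ℝ)*j/((k:ℝ)+2)) * Real.sin (π*(((b:ℕ)+1:ℕ):ℝ)*j/((k:ℝ)+2))
          / Real.sin (π*(j:ℝ)/((k:ℝ)+2))
        = Real.sin (π*(((a:ℕ)+1:ℕ):ℝ)*j/((k:ℝ)+2)) * Real.sin (π*(((b:ℕ)+1:ℕ):ℝ)*j/((k:ℝ)+2)) := by
      intro j hj
      rw [Finset.mem_Icc] at hj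
      have hsne : Real.sin (π*(j:ℝ)/((k:ℝ)+2)) ≠ 0 := ne_of_gt (vsin_pos k j hj.1 hj.2)
      rw [div_eq_iff hsne]
      push_cast
      ring
    rw [Rh, Finset.sum_congr rfl hterm, orth k ((a:ℕ)+1) ((b:ℕ)+1) hA1 hA2 hB1 hB2]
    show ((1 : Matrix (Fin (k+1)) (Fin (k+1)) ℤ) a b : ℝ) = _
    rw [Matrix.one_apply]
    by_cases hab : a = b
    · rw [if_pos hab, if_pos (by rw [hab])]
      have : ((k:ℝ)+2) ≠ 0 := by positivity
      push_cast
      field_simp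
    · rw [if_neg hab, if_neg (by intro h; exact hab (Fin.ext (by omega)))]
      simp
  | (n+2), a, b => by
    have key : (∑ c : Fin (k+1), Rh k (n+1) ((a:ℕ)+1) ((c:ℕ)+1) * ((pathG (k+1) c b : ℤ):ℝ))
        - Rh k n ((a:ℕ)+1) ((b:ℕ)+1) = Rh k (n+2) ((a:ℕ)+1) ((b:ℕ)+1) := by
      have hrec : ∀ j:ℕ, sn k (n+2) j + sn k n j
          = 2 * Real.cos (π*(j:ℝ)/((k:ℝ)+2)) * sn k (n+1) j := by
        intro j
        simp only [sn]
        push_cast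
        rw [sin_add_sin']
        rw [show (π*((n:ℝ)+2)*j/((k:ℝ)+2) + π*(n:ℝ)*j/((k:ℝ)+2))/2 = π*((n:ℝ)+1)*j/((k:ℝ)+2) by ring]
        rw [show (π*((n:ℝ)+2)*j/((k:ℝ)+2) - π*(n:ℝ)*j/((k:ℝ)+2))/2 = π*j/((k:ℝ)+2) by ring]
        ring
      calc (∑ c : Fin (k+1), Rh k (n+1) ((a:ℕ)+1) ((c:ℕ)+1) * ((pathG (k+1) c b : ℤ):ℝ))
            - Rh k n ((a:ℕ)+1) ((b:ℕ)+1)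
          = (2/((k:ℝ)+2)) * (∑ c : Fin (k+1), ∑ j ∈ Icc 1 (k+1),
              (sn k (n+1) j * sn k ((a:ℕ)+1) j / dn k j) * (sn k ((c:ℕ)+1) j * ((pathG (k+1) c b : ℤ):ℝ)))
            - Rh k n ((a:ℕ)+1) ((b:ℕ)+1) := by
            congr 1
            rw [Finset.mul_sum]
            apply Finset.sum_congr rfl
            intro c _
            rw [Rh_eq, Finset.mul_sum, Finset.sum_mul, Finset.mul_sum]
            apply Finset.sum_congr rfl
            intro j _
            ring
        _ = (2/((k:ℝ)+2)) * (∑ j ∈ Icc 1 (k+1),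
              (sn k (n+1) j * sn k ((a:ℕ)+1) j / dn k j) * (2 * Real.cos (π*(j:ℝ)/((k:ℝ)+2)) * sn k ((b:ℕ)+1) j))
            - Rh k n ((a:ℕ)+1) ((b:ℕ)+1) := by
            rw [Finset.sum_comm]
            congr 1
            congr 1
            apply Finset.sum_congr rfl
            intro j _
            rw [← Finset.mul_sum, eigen' k j b]
        _ = (2/((k:ℝ)+2)) * (∑ j ∈ Icc 1 (k+1),
              (sn k (n+2) j * sn k ((a:ℕ)+1) j * sn k ((b:ℕ)+1) j / dn k j
               + sn k n j * sn k ((a:ℕ)+1) j * sn k ((b:ℕ)+1) j / dn k j))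
            - Rh k n ((a:ℕ)+1) ((b:ℕ)+1) := by
            congr 1
            congr 1
            apply Finset.sum_congr rfl
            intro j _
            linear_combination (-(sn k ((a:ℕ)+1) j * sn k ((b:ℕ)+1) j / dn k j)) * (hrec j)
        _ = Rh k (n+2) ((a:ℕ)+1) ((b:ℕ)+1) := by
            rw [Finset.sum_add_distrib, Rh_eq k n, Rh_eq k (n+2)]
            ring
    have hrec2 : fusF (k+1) (n+2) a b
        = (∑ c : Fin (k+1), fusF (k+1) (n+1) a c * pathG (k+1) c b) - fusF (k+1) n a b := by
      show (fusF (k+1) (n+1) * pathG (k+1) - fusF (k+1) n) a b = _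
      rw [Matrix.sub_apply, Matrix.mul_apply]
    rw [hrec2]
    push_cast
    rw [← key]
    congr 1
    · apply Finset.sum_congr rfl
      intro c _
      rw [Rmain k (n+1) a c]
    · exact (Rmain k n a b)

/-- Verlinde formula for `SU(2)`: with `N = k+2`, for `1 ≤ n ≤ N−1` and
vertices `a b : Fin (k+1)` (with `1`-based labels `(a:ℕ)+1`, `(b:ℕ)+1`):
`(F_n)_{a,b} = (2/N)·∑_{j=1}^{N−1} sin(πnj/N)·sin(πaj/N)·sin(πbj/N)/sin(πj/N)`. -/
theorem verlinde_SU2 (k : ℕ) (n : ℕ) (hn1 : 1 ≤ n) (hn2 : n ≤ k + 1)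
    (a b : Fin (k + 1)) :
    ((fusF (k + 1) n a b : ℤ) : ℝ)
    = (2 / ((k : ℝ) + 2)) * ∑ j ∈ Finset.Icc 1 (k + 1),
        Real.sin (π * (n : ℝ) * (j : ℝ) / ((k : ℝ) + 2)) *
          Real.sin (π * ((a : ℕ) + 1 : ℝ) * (j : ℝ) / ((k : ℝ) + 2)) *
          Real.sin (π * ((b : ℕ) + 1 : ℝ) * (j : ℝ) / ((k : ℝ) + 2)) /
          Real.sin (π * (j : ℝ) / ((k : ℝ) + 2)) := by
  rw [Rmain k n a b]
  simp only [Rh]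
  push_cast
  rfl
end

section
/- Path matrix identity for A_r: let r ≥ 1, let G be the r×r adjacency matrix of the path graph on r vertices, define F_0 = 0, F_1 = I, F_{n+1} = F_n·G − F_{n−1}, and set X = ∑_{n=1}^{r} F_n. Let X↻ be the matrix obtained from X by cyclically permuting its rows: (X↻)_{1,n} = X_{r,n} and (X↻)_{m,n} = X_{m−1,n} for m ≥ 2. Then ∏_{m=1}^{r} ∏_{n=1}^{r} (X + X↻)_{m,n} = 2^r · sf(r)², where sf(r) = ∏_{s=1}^{r} s!. -/
open Finset

set_option maxHeartbeats 1600000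

/-- Closed-form entry of the fusion matrices. -/
def Ent (r n a b : ℕ) : ℤ :=
  if b < a + n ∧ a < b + n ∧ n ≤ a + b + 1 ∧ a + b + n ≤ 2*r - 1 ∧ (a+b+n) % 2 = 1
  then 1 else 0

lemma sum_if_eq (r : ℕ) (f : Fin r → ℤ) (c : ℕ) :
    (∑ k : Fin r, if (k : ℕ) = c then f k else 0)
      = if h : c < r then f ⟨c, h⟩ else 0 := by
  split_ifs with h
  · rw [Finset.sum_eq_single ⟨c, h⟩]
    · simp
    · intro k _ hk
      rw [if_neg]
      intro hc
      exact hk (Fin.ext hc)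
    · simp
  · apply Finset.sum_eq_zero
    intro k _
    rw [if_neg]
    intro hc
    exact h (hc ▸ k.isLt)

lemma mulG (r : ℕ) (M : Matrix (Fin r) (Fin r) ℤ) (a b : Fin r) :
    (M * pathG r) a b
      = (if h : (b : ℕ) + 1 < r then M a ⟨(b : ℕ) + 1, h⟩ else 0)
        + (if h : (b : ℕ) - 1 < r ∧ 1 ≤ (b : ℕ) then M a ⟨(b : ℕ) - 1, h.1⟩ else 0) := by
  rw [Matrix.mul_apply]
  have : ∀ k : Fin r, M a k * pathG r k b
      = (if (k : ℕ) = (b : ℕ) + 1 then M a k else 0)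
        + (if (k : ℕ) = (b : ℕ) - 1 ∧ 1 ≤ (b : ℕ) then M a k else 0) := by
    intro k
    simp only [pathG, Matrix.of_apply]
    split_ifs <;> (try (exfalso; omega)) <;> ring
  rw [Finset.sum_congr rfl (fun k _ => this k), Finset.sum_add_distrib,
    sum_if_eq r (fun k => M a k) ((b:ℕ)+1)]
  congr 1
  have h2 : (∑ k : Fin r, if (k : ℕ) = (b:ℕ) - 1 ∧ 1 ≤ (b:ℕ) then M a k else 0)
      = if 1 ≤ (b:ℕ) then (∑ k : Fin r, if (k : ℕ) = (b:ℕ) - 1 then M a k else 0) else 0 := by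
    split_ifs with hb
    · apply Finset.sum_congr rfl
      intro k _
      simp [hb]
    · apply Finset.sum_eq_zero
      intro k _
      simp [hb]
  rw [h2, sum_if_eq r (fun k => M a k) ((b:ℕ)-1)]
  have hlt : (b:ℕ) - 1 < r := by omega
  split_ifs <;> simp_all

theorem fus_entry (r : ℕ) (hr : 1 ≤ r) :
    ∀ (n : ℕ), n ≤ r → ∀ a b : Fin r, fusF r n a b = Ent r n a b
  | 0, _, a, b => by
      have ha := a.isLt; have hb := b.isLt
      show (0 : Matrix (Fin r) (Fin r) ℤ) a b = _
      simp only [Matrix.zero_apply, Ent]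
      split_ifs <;> omega
  | 1, _, a, b => by
      have ha := a.isLt; have hb := b.isLt
      show (1 : Matrix (Fin r) (Fin r) ℤ) a b = _
      rw [Matrix.one_apply]
      simp only [Ent, Fin.ext_iff]
      split_ifs <;> omega
  | (n+2), hn, a, b => by
      have ih1 := fus_entry r hr (n+1) (by omega)
      have ih0 := fus_entry r hr n (by omega)
      have ha := a.isLt; have hb := b.isLt
      show (fusF r (n+1) * pathG r - fusF r n) a b = _
      rw [Matrix.sub_apply, mulG r (fusF r (n+1)) a b, ih0 a b]
      split_ifs with h1 h2 h3
      · rw [ih1 a ⟨(b:ℕ)+1, h1⟩, ih1 a ⟨(b:ℕ)-1, h2.1⟩]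
        simp only [Ent]
        split_ifs <;> omega
      · rw [ih1 a ⟨(b:ℕ)+1, h1⟩]
        simp only [Ent]
        split_ifs <;> omega
      · rw [ih1 a ⟨(b:ℕ)-1, h3.1⟩]
        simp only [Ent]
        split_ifs <;> omega
      · simp only [Ent]
        split_ifs <;> omega

/-- Count function: number of `i ∈ [1, N]` with `Ent r i a b = 1`. -/
def cntC (r a b N : ℕ) : ℕ :=
  if (max a b - min a b) + 1 ≤ min (min N (a+b+1)) (2*r-1-a-b)
  then (min (min N (a+b+1)) (2*r-1-a-b) - (max a b - min a b) - 1)/2 + 1 else 0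

lemma ent_sum (r a b : ℕ) (ha : a < r) (hb : b < r) :
    ∀ N : ℕ, (∑ i ∈ Finset.Icc 1 N, Ent r i a b) = (cntC r a b N : ℤ) := by
  intro N
  induction N with
  | zero => simp [cntC]
  | succ N ih =>
      rw [Finset.sum_Icc_succ_top (show 1 ≤ N+1 by omega) (fun i => Ent r i a b), ih]
      simp only [cntC, Ent]
      split_ifs <;> push_cast <;> omega

/-- The entry of the path matrix `X`. -/
def muN (r a b : ℕ) : ℕ := min (min (a+1) (b+1)) (min (r-a) (r-b))

lemma X_entry (r : ℕ) (hr : 1 ≤ r) (a b : Fin r) :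
    (∑ i ∈ Finset.Icc 1 r, fusF r i) a b = ((muN r (a : ℕ) (b : ℕ) : ℕ) : ℤ) := by
  have ha := a.isLt; have hb := b.isLt
  rw [Matrix.sum_apply]
  rw [Finset.sum_congr rfl (fun i hi => fus_entry r hr i (Finset.mem_Icc.mp hi).2 a b)]
  rw [ent_sum r a b ha hb r]
  congr 1
  simp only [cntC, muN]
  split_ifs <;> omega

def gN (k u : ℕ) : ℕ := if u ≤ k then 2*u else 2*k+1

lemma prod_Icc_two (n : ℕ) : (∏ t ∈ Finset.Icc 2 n, t) = n.factorial := by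
  induction n with
  | zero => decide
  | succ n ih =>
      rcases Nat.eq_zero_or_pos n with h|h
      · subst h; decide
      · rw [Finset.prod_Icc_succ_top (by omega), ih, Nat.factorial_succ, mul_comm]

lemma prodpow (r : ℕ) :
    (∏ t ∈ Finset.Icc 2 r, t^(2*(r+1-t))) = (∏ s ∈ Finset.Icc 1 r, s.factorial)^2 := by
  induction r with
  | zero => decide
  | succ r ih =>
      have h1 : (∏ t ∈ Finset.Icc 2 (r+1), t^(2*(r+1+1-t)))
          = (∏ t ∈ Finset.Icc 2 (r+1), t^(2*(r+1-t))) * (∏ t ∈ Finset.Icc 2 (r+1), t^2) := by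
        rw [← Finset.prod_mul_distrib]
        refine Finset.prod_congr rfl fun t ht => ?_
        rw [← pow_add]
        have := Finset.mem_Icc.mp ht
        congr 1
        omega
      have h2 : (∏ t ∈ Finset.Icc 2 (r+1), t^(2*(r+1-t)))
          = ∏ t ∈ Finset.Icc 2 r, t^(2*(r+1-t)) := by
        rcases Nat.eq_zero_or_pos r with h|h
        · subst h; decide
        · rw [Finset.prod_Icc_succ_top (by omega), Nat.sub_self, mul_zero, pow_zero, mul_one]
      have h3 : (∏ t ∈ Finset.Icc 2 (r+1), t^2) = ((r+1).factorial)^2 := by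
        rw [Finset.prod_pow, prod_Icc_two]
      rw [h1, h2, h3, ih, Finset.prod_Icc_succ_top (by omega : 1 ≤ r+1), mul_pow]

lemma card_filter_g (r t : ℕ) (h2 : 2 ≤ t) (htr : t ≤ r) :
    ((Finset.Ico 1 r ×ˢ Finset.range r).filter
      (fun p => gN (min p.1 (r-p.1)) (min (p.2+1) (r-p.2)) = t)).card = 2*(r+1-t) := by
  rcases Nat.even_or_odd t with ⟨u, hu⟩ | ⟨k, hk⟩
  · have hset : ((Finset.Ico 1 r ×ˢ Finset.range r).filter
        (fun p => gN (min p.1 (r-p.1)) (min (p.2+1) (r-p.2)) = t))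
        = (Finset.Icc u (r-u)) ×ˢ ({u-1, r-u} : Finset ℕ) := by
      ext ⟨m, n⟩
      rw [Finset.mem_filter]
      simp only [Finset.mem_filter, Finset.mem_product, Finset.mem_Ico, Finset.mem_range,
        Finset.mem_Icc, Finset.mem_insert, Finset.mem_singleton, gN]
      split_ifs <;> omega
    rw [hset, Finset.card_product, Nat.card_Icc,
      Finset.card_insert_of_notMem (by simp only [Finset.mem_singleton]; omega),
      Finset.card_singleton]
    omega
  · have hset : ((Finset.Ico 1 r ×ˢ Finset.range r).filter
        (fun p => gN (min p.1 (r-p.1)) (min (p.2+1) (r-p.2)) = t))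
        = ({k, r-k} : Finset ℕ) ×ˢ (Finset.Icc k (r-k-1)) := by
      ext ⟨m, n⟩
      rw [Finset.mem_filter]
      simp only [Finset.mem_filter, Finset.mem_product, Finset.mem_Ico, Finset.mem_range,
        Finset.mem_Icc, Finset.mem_insert, Finset.mem_singleton, gN]
      split_ifs <;> omega
    rw [hset, Finset.card_product, Nat.card_Icc,
      Finset.card_insert_of_notMem (by simp only [Finset.mem_singleton]; omega),
      Finset.card_singleton]
    omega

lemma inner_prod (r : ℕ) :
    (∏ p ∈ Finset.Ico 1 r ×ˢ Finset.range r, gN (min p.1 (r-p.1)) (min (p.2+1) (r-p.2)))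
      = (∏ s ∈ Finset.Icc 1 r, s.factorial)^2 := by
  rw [← prodpow r]
  have hcomp := Finset.prod_comp (s := Finset.Ico 1 r ×ˢ Finset.range r) (id : ℕ → ℕ)
    (fun p : ℕ×ℕ => gN (min p.1 (r-p.1)) (min (p.2+1) (r-p.2)))
  simp only [id_eq] at hcomp
  rw [hcomp]
  have hsub : ((Finset.Ico 1 r ×ˢ Finset.range r).image
      (fun p => gN (min p.1 (r-p.1)) (min (p.2+1) (r-p.2)))) ⊆ Finset.Icc 2 r := by
    intro t ht
    obtain ⟨⟨m, n⟩, hmn, rfl⟩ := Finset.mem_image.mp ht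
    simp only [Finset.mem_product, Finset.mem_Ico, Finset.mem_range] at hmn
    simp only [gN, Finset.mem_Icc]
    split_ifs <;> omega
  rw [Finset.prod_subset hsub (fun t _ hnt => by
    rw [Finset.filter_eq_empty_iff.mpr, Finset.card_empty, pow_zero]
    intro p hp hgp
    exact hnt (Finset.mem_image.mpr ⟨p, hp, hgp⟩))]
  refine Finset.prod_congr rfl fun t ht => ?_
  have := Finset.mem_Icc.mp ht
  rw [card_filter_g r t this.1 this.2]

lemma pointwise (r m n : ℕ) (hm : m < r) (hn : n < r) :
    muN r m n + muN r ((m+r-1)%r) n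
      = if m = 0 then 2 else gN (min m (r-m)) (min (n+1) (r-n)) := by
  rcases m with _ | m'
  · rw [Nat.mod_eq_of_lt (show 0+r-1 < r by omega), if_pos rfl]
    simp only [muN]
    omega
  · rw [show (m'+1+r-1)%r = m' by
      rw [show m'+1+r-1 = m'+r by omega, Nat.add_mod_right]
      exact Nat.mod_eq_of_lt (by omega)]
    rw [if_neg (show ¬(m'+1 = 0) by omega)]
    simp only [muN, gN]
    rcases le_or_gt (min (n+1) (r-n)) (min (m'+1) (r-(m'+1))) with hc | hc
    · rw [if_pos hc]
      omega
    · rw [if_neg (by omega)]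
      omega

lemma key (r : ℕ) (hr : 1 ≤ r) :
    (∏ m ∈ Finset.range r, ∏ n ∈ Finset.range r,
      (muN r m n + muN r ((m+r-1)%r) n))
      = 2^r * (∏ s ∈ Finset.Icc 1 r, s.factorial)^2 := by
  have h1 : (∏ m ∈ Finset.range r, ∏ n ∈ Finset.range r,
      (muN r m n + muN r ((m+r-1)%r) n))
      = ∏ m ∈ Finset.range r, ∏ n ∈ Finset.range r,
        (if m = 0 then 2 else gN (min m (r-m)) (min (n+1) (r-n))) := by
    refine Finset.prod_congr rfl fun m hm => Finset.prod_congr rfl fun n hn => ?_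
    exact pointwise r m n (Finset.mem_range.mp hm) (Finset.mem_range.mp hn)
  rw [h1]
  rw [Finset.prod_eq_mul_prod_sdiff_singleton_of_mem
    (show (0:ℕ) ∈ Finset.range r by simp; omega)]
  have h2 : Finset.range r \ {0} = Finset.Ico 1 r := by
    ext x
    simp only [Finset.mem_range, Finset.mem_sdiff, Finset.mem_Ico, Finset.mem_singleton]
    omega
  rw [h2]
  have h3 : (∏ n ∈ Finset.range r,
      (if (0:ℕ) = 0 then 2 else gN (min 0 (r-0)) (min (n+1) (r-n)))) = 2^r := by
    simp
  have h4 : (∏ m ∈ Finset.Ico 1 r, ∏ n ∈ Finset.range r,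
      (if m = 0 then 2 else gN (min m (r-m)) (min (n+1) (r-n))))
      = ∏ m ∈ Finset.Ico 1 r, ∏ n ∈ Finset.range r,
        gN (min m (r-m)) (min (n+1) (r-n)) := by
    refine Finset.prod_congr rfl fun m hm => Finset.prod_congr rfl fun n _ => ?_
    rw [if_neg]
    have := Finset.mem_Ico.mp hm
    omega
  rw [h3, h4, ← Finset.prod_product']
  rw [inner_prod r]

/-- Path matrix identity for `A_r`: let `X = ∑_{n=1}^r F_n` and let `X↻` be
obtained from `X` by cyclically permuting its rows (row `m` of `X↻` is row
`m−1` of `X`, row `1` of `X↻` being row `r` of `X`; in `0`-based indexing, row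
`m` of `X↻` is row `(m+r−1) mod r` of `X`). Then
`∏_{m,n} (X + X↻)_{m,n} = 2^r · sf(r)²` with `sf(r) = ∏_{s=1}^r s!`. -/
theorem pathMatrix_identity_Ar (r : ℕ) (hr : 1 ≤ r) :
    ∏ m : Fin r, ∏ n : Fin r,
      ((∑ i ∈ Finset.Icc 1 r, fusF r i) m n +
        (∑ i ∈ Finset.Icc 1 r, fusF r i)
          ⟨((m : ℕ) + r - 1) % r, Nat.mod_lt _ (by omega)⟩ n)
    = 2 ^ r * ((∏ s ∈ Finset.Icc 1 r, Nat.factorial s : ℕ) : ℤ) ^ 2 := by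
  have hfin : (∏ m : Fin r, ∏ n : Fin r,
      (muN r (m : ℕ) (n : ℕ) + muN r (((m : ℕ) + r - 1) % r) (n : ℕ)))
      = 2^r * (∏ s ∈ Finset.Icc 1 r, s.factorial)^2 := by
    rw [← key r hr]
    rw [← Fin.prod_univ_eq_prod_range
      (fun m => ∏ n ∈ Finset.range r, (muN r m n + muN r ((m+r-1)%r) n)) r]
    refine Finset.prod_congr rfl fun m _ => ?_
    rw [← Fin.prod_univ_eq_prod_range
      (fun n => muN r (m : ℕ) n + muN r (((m : ℕ)+r-1)%r) n) r]
  simp only [X_entry r hr]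
  exact_mod_cast hfin
end
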